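/- arXiv:1805.06077 — 3 statements merged into one kernel-verified Lean document; each statement's English description precedes it below -/
import Mathlib

section
/- Define B_r(α,β) to be the number of words over an alphabet of α+β letters, where α specified letters each occur twice and β specified letters each occur once, avoiding the consecutive pattern 12...r. Then B_r(α,β) = α·B_r(α-1,β+1) + β·B_r(α,β-1) + Σ_{j≥1} (-1)^j Σ_{i_1+i_2 = k_j} C(α,i_1)·C(β,i_2)·B_r(α-i_1, β-i_2+i_1), where k_j runs through r, r+1, 2r, 2r+1, 3r, 3r+1, ... with alternating signs -,+,-,+,..., B_r(0,0)=1, and B_r is 0 on negative arguments. -/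
def AvoidsInc {α : Type*} [LT α] (r : ℕ) (w : List α) : Prop :=
  ¬ ∃ l : List α, l <:+: w ∧ l.length = r ∧ l.Chain' (· < ·)

noncomputable def wordAvoidCount (r n : ℕ) (m : Fin n → ℕ) : ℕ :=
  Nat.card {w : List (Fin n) // (∀ j, w.count j = m j) ∧ AvoidsInc r w}

/-- `B_r(α,β) = f_r(2^α 1^β)`: the number of words over an alphabet of `α + β`
letters, the first `α` letters occurring twice and the remaining `β` letters
once, avoiding the consecutive pattern `1 2 ... r`. -/
noncomputable def B (r a b : ℕ) : ℕ :=
  wordAvoidCount r (a + b) (fun i => if (i : ℕ) < a then 2 else 1)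


set_option linter.unusedSectionVars false
set_option maxHeartbeats 1000000

open List Finset

theorem List.chain'_nil {α : Type*} {R : α → α → Prop} : List.Chain' R [] := List.isChain_nil

theorem List.chain'_singleton {α : Type*} {R : α → α → Prop} (a : α) : List.Chain' R [a] :=
  List.isChain_singleton a

theorem List.chain'_append {α : Type*} {R : α → α → Prop} {l₁ l₂ : List α} :
    List.Chain' R (l₁ ++ l₂) ↔
      List.Chain' R l₁ ∧ List.Chain' R l₂ ∧ ∀ x ∈ l₁.getLast?, ∀ y ∈ l₂.head?, R x y :=
  List.isChain_append

theorem List.chain'_map {α β : Type*} {R : α → α → Prop} (f : β → α) {l : List β} :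
    List.Chain' R (map f l) ↔ List.Chain' (fun a b : β => R (f a) (f b)) l :=
  List.isChain_map f

theorem List.chain'_iff_get {α : Type*} {R : α → α → Prop} {l : List α} :
    List.Chain' R l ↔ ∀ (i : ℕ) (h : i < l.length - 1),
      R (l.get ⟨i, by omega⟩) (l.get ⟨i + 1, by omega⟩) := by
  show List.IsChain R l ↔ _
  rw [List.isChain_iff_getElem]
  exact ⟨fun h i hi => h i (by omega), fun h i hi => h i (by omega)⟩

section Basics


variable {α : Type*} [LinearOrder α] {r : ℕ}

lemma take_drop_infix (w : List α) (i k : ℕ) : (w.drop i).take k <:+: w :=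
  ((w.drop i).take_prefix k).isInfix.trans (w.drop_suffix i).isInfix

lemma avoidsInc_iff {w : List α} :
    AvoidsInc r w ↔ ∀ i, i + r ≤ w.length → ¬ ((w.drop i).take r).Chain' (· < ·) := by
  constructor
  · intro h i hi hc
    exact h ⟨(w.drop i).take r, take_drop_infix w i r, by
      simp only [List.length_take, List.length_drop]; omega, hc⟩
  · rintro h ⟨l, hinf, hlen, hc⟩
    obtain ⟨s, t, rfl⟩ := hinf
    refine h s.length (by simp; omega) ?_
    have : (s ++ (l ++ t)).drop s.length = l ++ t := by simp
    rw [List.append_assoc, this, ← hlen, List.take_left]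
    exact hc

lemma avoidsInc_nil (hr : 1 ≤ r) : AvoidsInc r ([] : List α) := by
  rintro ⟨l, hinf, hlen, -⟩
  have := hinf.length_le
  simp [hlen] at this
  omega

lemma AvoidsInc.infix {w w' : List α} (h : AvoidsInc r w) (hw : w' <:+: w) : AvoidsInc r w' :=
  fun ⟨l, hl, h1, h2⟩ => h ⟨l, hl.trans hw, h1, h2⟩

lemma chain'_length_lt {u : List α} (h : AvoidsInc r u) (hu : u.Chain' (· < ·)) :
    u.length < r := by
  by_contra hle
  push_neg at hle
  exact h ⟨u.take r, (u.take_prefix r).isInfix, by simp [length_take]; omega, hu.take r⟩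

lemma avoidsInc_append (hr : 1 ≤ r) {u v : List α} (hu : u.Chain' (· < ·))
    (hj : ∀ x ∈ u.getLast?, ∀ y ∈ v.head?, ¬ x < y) :
    AvoidsInc r (u ++ v) ↔ u.length < r ∧ AvoidsInc r v := by
  constructor
  · intro h
    exact ⟨chain'_length_lt (h.infix ⟨[], v, by simp⟩) hu,
      h.infix ⟨u, [], by simp⟩⟩
  · rintro ⟨hlen, hv⟩
    rw [avoidsInc_iff]
    intro i hi hc
    simp only [List.length_append] at hi
    rcases le_or_gt u.length i with hui | hui
    · -- segment inside v
      have hdrop : (u ++ v).drop i = v.drop (i - u.length) := by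
        rw [List.drop_append, List.drop_eq_nil_of_le hui, List.nil_append]
      rw [hdrop] at hc
      exact (avoidsInc_iff.1 hv) (i - u.length) (by omega) hc
    · -- straddles the junction
      have hvne : v ≠ [] := by
        intro h; subst h; simp at hi; omega
      have hune : u ≠ [] := by
        intro h; subst h; simp at hui
      set seg := ((u ++ v).drop i).take r with hseg
      have hsl : seg.length = r := by
        simp only [hseg, List.length_take, List.length_drop, List.length_append]; omega
      set p : ℕ := u.length - 1 - i with hp
      have hpr : p + 1 < r := by omega
      have h1 : seg[p]? = u.getLast? := by
        rw [hseg, List.getElem?_take, if_pos (by omega), List.getElem?_drop,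
          List.getElem?_append, if_pos (by omega), List.getLast?_eq_getElem?]
        congr 1
        omega
      have h2 : seg[p+1]? = v.head? := by
        rw [hseg, List.getElem?_take, if_pos hpr, List.getElem?_drop,
          List.head?_eq_getElem?]
        have : i + (p + 1) = u.length := by omega
        rw [this, List.getElem?_append_right (le_refl _), Nat.sub_self]
      have hlt : ∀ x ∈ seg[p]?, ∀ y ∈ seg[p+1]?, x < y := by
        have := List.chain'_iff_get.1 hc p (by omega)
        intro x hx y hy
        rw [List.get_eq_getElem, List.get_eq_getElem] at this
        rw [List.getElem?_eq_getElem (by omega)] at hx hy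
        simp at hx hy
        subst hx; subst hy
        convert this using 2
      rw [h1, h2] at hlt
      have hxs : u.getLast?.isSome := List.getLast?_isSome.2 hune
      have hys : v.head?.isSome := by cases v with | nil => exact absurd rfl hvne | cons _ _ => rfl
      obtain ⟨x, hx⟩ := Option.isSome_iff_exists.1 hxs
      obtain ⟨y, hy⟩ := Option.isSome_iff_exists.1 hys
      exact hj x (Option.mem_def.2 hx) y (Option.mem_def.2 hy)
        (hlt x (Option.mem_def.2 hx) y (Option.mem_def.2 hy))

variable {α : Type*} [LinearOrder α] {r : ℕ}


open Classical in
noncomputable def maxInc (w : List α) : ℕ :=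
  Nat.findGreatest (fun m => (w.take m).Chain' (· < ·)) w.length

lemma chain'_of_length_le_one {l : List α} (h : l.length ≤ 1) : l.Chain' (· < ·) := by
  match l, h with
  | [], _ => exact List.chain'_nil
  | [a], _ => exact List.chain'_singleton a

lemma maxInc_le (w : List α) : maxInc w ≤ w.length := by
  classical exact Nat.findGreatest_le _

lemma chain'_take_maxInc (w : List α) : (w.take (maxInc w)).Chain' (· < ·) := by
  classical
  refine Nat.findGreatest_spec (P := fun m => (w.take m).Chain' (· < ·)) (Nat.zero_le _) ?_
  simp only [List.take_zero]
  exact List.chain'_nil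

lemma take_chain'_iff {w : List α} {k : ℕ} (hk : k ≤ w.length) :
    (w.take k).Chain' (· < ·) ↔ k ≤ maxInc w := by
  classical
  constructor
  · intro h
    exact Nat.le_findGreatest hk h
  · intro h
    have : w.take k = (w.take (maxInc w)).take k := by
      rw [List.take_take, min_eq_left h]
    rw [this]
    exact (chain'_take_maxInc w).take k

lemma one_le_maxInc {w : List α} (h : 1 ≤ w.length) : 1 ≤ maxInc w :=
  (take_chain'_iff h).1 (chain'_of_length_le_one (by simp))

lemma maxInc_junction {w : List α} (h : maxInc w < w.length) :
    ∀ x ∈ (w.take (maxInc w)).getLast?, ∀ y ∈ (w.drop (maxInc w)).head?, ¬ x < y := by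
  classical
  set M := maxInc w with hM
  have hnc : ¬ (w.take (M + 1)).Chain' (· < ·) := by
    intro hc
    have := (take_chain'_iff (by omega)).1 hc
    omega
  intro x hx y hy hlt
  apply hnc
  have hsplit : w.take (M + 1) = w.take M ++ (w.drop M).take 1 := by
    rw [← List.take_add]
  rw [hsplit, List.chain'_append]
  refine ⟨chain'_take_maxInc w, chain'_of_length_le_one (by simp), ?_⟩
  intro x' hx' y' hy'
  have hhead : ((w.drop M).take 1).head? = (w.drop M).head? := by
    cases w.drop M <;> simp
  rw [hhead] at hy'
  rw [hx'] at hx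
  rw [hy'] at hy
  simp only [Option.mem_def, Option.some.injEq] at hx hy
  subst hx; subst hy
  exact hlt

lemma drop_avoid_iff (hr : 1 ≤ r) {w : List α} {k : ℕ} (hk : k ≤ maxInc w) :
    AvoidsInc r (w.drop k) ↔ (maxInc w < k + r ∧ AvoidsInc r (w.drop (maxInc w))) := by
  classical
  set M := maxInc w with hM
  have hML := maxInc_le w
  have hsplit : w.drop k = (w.take M).drop k ++ w.drop M := by
    conv_lhs => rw [← List.take_append_drop M w]
    rw [List.drop_append]
    have : k - (w.take M).length = 0 := by
      simp only [List.length_take]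
      omega
    rw [this, List.drop_zero]
  have hu : ((w.take M).drop k).Chain' (· < ·) := (chain'_take_maxInc w).drop k
  have hjun : ∀ x ∈ ((w.take M).drop k).getLast?, ∀ y ∈ (w.drop M).head?, ¬ x < y := by
    rcases Nat.eq_or_lt_of_le hk with heq | hlt
    · intro x hx
      have hnil : (w.take M).drop k = [] := by
        apply List.drop_eq_nil_of_le
        simp only [List.length_take]
        omega
      rw [hnil] at hx
      simp at hx
    · have hlast : ((w.take M).drop k).getLast? = (w.take M).getLast? := by
        rw [List.getLast?_eq_getElem?, List.getLast?_eq_getElem?, List.getElem?_drop]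
        congr 1
        simp only [List.length_drop, List.length_take]
        omega
      rw [hlast]
      rcases Nat.eq_or_lt_of_le hML with heq | hlt2
      · intro x hx y hy
        have : w.drop M = [] := by
          apply List.drop_eq_nil_of_le
          omega
        rw [this] at hy
        simp at hy
      · exact maxInc_junction hlt2
  rw [hsplit, avoidsInc_append hr hu hjun]
  have : ((w.take M).drop k).length = M - k := by
    simp only [List.length_drop, List.length_take]
    omega
  rw [this]
  constructor
  · rintro ⟨h1, h2⟩; exact ⟨by omega, h2⟩
  · rintro ⟨h1, h2⟩; exact ⟨by omega, h2⟩

open Classical in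
noncomputable def chi (r k : ℕ) (w : List α) : ℤ :=
  if (k ≤ w.length ∧ (w.take k).Chain' (· < ·) ∧ AvoidsInc r (w.drop k)) then 1 else 0

open Classical in
lemma chi_eval (hr : 1 ≤ r) (k : ℕ) (w : List α) :
    chi r k w = if (k ≤ maxInc w ∧ maxInc w < k + r ∧ AvoidsInc r (w.drop (maxInc w)))
      then 1 else 0 := by
  classical
  rw [chi]
  congr 1
  rw [eq_iff_iff]
  constructor
  · rintro ⟨h1, h2, h3⟩
    have hk : k ≤ maxInc w := (take_chain'_iff h1).1 h2
    have := (drop_avoid_iff hr hk).1 h3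
    exact ⟨hk, this.1, this.2⟩
  · rintro ⟨h1, h2, h3⟩
    have hkl : k ≤ w.length := le_trans h1 (maxInc_le w)
    exact ⟨hkl, (take_chain'_iff hkl).2 h1, (drop_avoid_iff hr h1).2 ⟨h2, h3⟩⟩

open Classical in
lemma winSum {r : ℕ} (hr : 1 ≤ r) (Mv J : ℕ) (hMJ : Mv ≤ r * J) :
    (∑ j ∈ Finset.Icc 1 J, (if (j * r ≤ Mv ∧ Mv < j * r + r) then (1:ℤ) else 0))
      = if r ≤ Mv then 1 else 0 := by
  classical
  rcases lt_or_ge Mv r with hlt | hle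
  · rw [if_neg (by omega)]
    apply Finset.sum_eq_zero
    intro j hj
    simp only [Finset.mem_Icc] at hj
    rw [if_neg]
    rintro ⟨h1, -⟩
    nlinarith [hj.1]
  · rw [if_pos hle]
    set q := Mv / r with hq
    have hdm := Nat.div_add_mod Mv r
    have hmod : Mv % r < r := Nat.mod_lt _ (by omega)
    have hq1 : 1 ≤ q := (Nat.one_le_div_iff (by omega)).2 hle
    have hqJ : q ≤ J := by
      have h1 : Mv / r ≤ (r * J) / r := Nat.div_le_div_right hMJ
      rwa [Nat.mul_div_cancel_left J (by omega : 0 < r)] at h1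
    have : ∀ j ∈ Finset.Icc 1 J,
        (if (j * r ≤ Mv ∧ Mv < j * r + r) then (1:ℤ) else 0) = if j = q then 1 else 0 := by
      intro j hj
      congr 1
      rw [eq_iff_iff]
      constructor
      · rintro ⟨h1, h2⟩
        have hj' : Mv / r = j := Nat.div_eq_of_lt_le h1 (by rw [Nat.succ_mul]; omega)
        omega
      · rintro rfl
        have hqr : q * r = r * (Mv / r) := by rw [hq, mul_comm]
        constructor
        · omega
        · omega
    rw [Finset.sum_congr rfl this, Finset.sum_ite_eq' (Finset.Icc 1 J) q (fun _ => (1:ℤ)),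
      if_pos (Finset.mem_Icc.2 ⟨hq1, hqJ⟩)]

open Classical in
lemma claim1 {r : ℕ} (hr : 2 ≤ r) {w : List α} (J : ℕ) (h1 : 1 ≤ w.length)
    (h2 : w.length ≤ r * J) :
    (if AvoidsInc r w then (1:ℤ) else 0) =
      chi r 1 w + ∑ j ∈ Finset.Icc 1 J, (-(chi r (j * r) w) + chi r (j * r + 1) w) := by
  classical
  set M := maxInc w with hM
  have hM1 : 1 ≤ M := one_le_maxInc h1
  have hML : M ≤ w.length := maxInc_le w
  by_cases hQ : AvoidsInc r (w.drop M)
  · have hAv : AvoidsInc r w ↔ M < r := by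
      have := drop_avoid_iff (by omega : 1 ≤ r) (Nat.zero_le M) (w := w)
      rw [List.drop_zero] at this
      rw [this]
      constructor
      · rintro ⟨h, -⟩; omega
      · intro h; exact ⟨by omega, hQ⟩
    have hchi : ∀ k, chi r k w = if (k ≤ M ∧ M < k + r) then (1:ℤ) else 0 := by
      intro k
      rw [chi_eval (by omega) k w]
      congr 1
      rw [eq_iff_iff]
      constructor
      · rintro ⟨a, b, -⟩; exact ⟨a, b⟩
      · rintro ⟨a, b⟩; exact ⟨a, b, hQ⟩
    rw [hchi]
    have hB : ∀ j ∈ Finset.Icc 1 J, chi r (j * r + 1) w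
        = if (j * r ≤ M - 1 ∧ M - 1 < j * r + r) then (1:ℤ) else 0 := by
      intro j hj
      rw [hchi]
      congr 1
      rw [eq_iff_iff]
      omega
    have hA : ∀ j ∈ Finset.Icc 1 J, (-(chi r (j * r) w) + chi r (j * r + 1) w)
        = -(if (j * r ≤ M ∧ M < j * r + r) then (1:ℤ) else 0)
          + (if (j * r ≤ M - 1 ∧ M - 1 < j * r + r) then (1:ℤ) else 0) := by
      intro j hj
      rw [hchi, hB j hj]
    rw [Finset.sum_congr rfl hA, Finset.sum_add_distrib, Finset.sum_neg_distrib,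
      winSum (by omega) M J (by omega), winSum (by omega) (M - 1) J (by omega)]
    have hAviff : (if AvoidsInc r w then (1:ℤ) else 0) = if M < r then 1 else 0 := by
      congr 1; rw [eq_iff_iff]; exact hAv
    rw [hAviff]
    split_ifs <;> omega
  · have hAv : ¬ AvoidsInc r w := by
      intro h
      exact hQ (h.infix (w.drop_suffix M).isInfix)
    have hchi : ∀ k, chi r k w = 0 := by
      intro k
      rw [chi_eval (by omega : 1 ≤ r)]
      rw [if_neg]
      rintro ⟨-, -, h⟩
      exact hQ h
    rw [if_neg hAv]
    simp [hchi]
end Basics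

section Count

variable {n : ℕ}

def base (n : ℕ) (m : Fin n → ℕ) : List (Fin n) :=
  (List.finRange n).flatMap (fun j => List.replicate (m j) j)

lemma count_base (m : Fin n → ℕ) (j : Fin n) : (base n m).count j = m j := by
  classical
  rw [base, List.count_flatMap]
  have : ∀ i : Fin n, (List.count j ∘ fun j' => List.replicate (m j') j') i
      = if i = j then m j else 0 := by
    intro i
    simp only [Function.comp_apply, List.count_replicate]
    rcases eq_or_ne i j with rfl | hne
    · simp
    · simp [hne, Ne.symm hne]
  rw [List.map_congr_left (fun i _ => this i), ← Fin.sum_univ_def, Finset.sum_ite_eq']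
  simp

open Classical in
noncomputable def contW (n : ℕ) (m : Fin n → ℕ) : Finset (List (Fin n)) :=
  (base n m).permutations.toFinset

lemma mem_contW {m : Fin n → ℕ} {w : List (Fin n)} :
    w ∈ contW n m ↔ ∀ j, w.count j = m j := by
  classical
  rw [contW, List.mem_toFinset, List.mem_permutations, List.perm_iff_count]
  constructor <;> intro h j
  · rw [h j, count_base]
  · rw [h j, count_base]

lemma length_of_mem_contW {m : Fin n → ℕ} {w : List (Fin n)} (h : w ∈ contW n m) :
    w.length = ∑ j, m j := by
  classical
  rw [mem_contW] at h
  have h2 := Multiset.sum_count_eq_card (s := (Finset.univ : Finset (Fin n)))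
    (m := (w : Multiset (Fin n))) (fun a _ => Finset.mem_univ a)
  simp only [Multiset.coe_count, Multiset.coe_card] at h2
  rw [← h2]
  exact Finset.sum_congr rfl (fun j _ => h j)

open Classical in
noncomputable def Fc (r n : ℕ) (m : Fin n → ℕ) : ℕ :=
  ((contW n m).filter (fun w => AvoidsInc r w)).card

lemma wordAvoidCount_eq (r : ℕ) (m : Fin n → ℕ) :
    wordAvoidCount r n m = Fc r n m := by
  classical
  rw [wordAvoidCount, Fc, ← Nat.card_eq_finsetCard]
  apply Nat.card_congr
  apply Equiv.subtypeEquivRight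
  intro w
  simp only [Finset.mem_filter, mem_contW]

noncomputable def descW (n : ℕ) (m : Fin n → ℕ) : List (Fin n) :=
  Multiset.sort (base n m) (· ≥ ·)

lemma descW_mem (m : Fin n → ℕ) : descW n m ∈ contW n m := by
  classical
  rw [mem_contW]
  intro j
  have h : ((descW n m : List (Fin n)) : Multiset (Fin n)) = (base n m : Multiset (Fin n)) :=
    Multiset.sort_eq _ _
  rw [Multiset.coe_eq_coe] at h
  rw [h.count_eq, count_base]

lemma descW_sorted (m : Fin n → ℕ) : (descW n m).Chain' (fun a b => b ≤ a) := by
  have h : (descW n m).Pairwise (· ≥ ·) := Multiset.pairwise_sort _ _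
  exact h.isChain

lemma desc_unique {m : Fin n → ℕ} {w : List (Fin n)} (hw : w ∈ contW n m)
    (hd : w.Chain' (fun a b => b ≤ a)) : w = descW n m := by
  classical
  refine List.Perm.eq_of_pairwise' (r := (· ≥ ·)) ?_ ?_ ?_
  rotate_left 2
  · rw [List.perm_iff_count]
    intro j
    rw [mem_contW] at hw
    have := descW_mem m
    rw [mem_contW] at this
    rw [hw j, this j]
  · exact hd.pairwise
  · exact Multiset.pairwise_sort _ _

end Count

section Asc
variable {n : ℕ}

def AscAt (w : List (Fin n)) (i : ℕ) : Prop := ∃ x ∈ w[i]?, ∃ y ∈ w[i + 1]?, x < y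

lemma ascAt_iff {w : List (Fin n)} {i : ℕ} :
    AscAt w i ↔ ∃ h : i + 1 < w.length, w[i]'(by omega) < w[i + 1]'h := by
  constructor
  · rintro ⟨x, hx, y, hy, hxy⟩
    rw [Option.mem_def, List.getElem?_eq_some_iff] at hx hy
    obtain ⟨h1, e1⟩ := hx
    obtain ⟨h2, e2⟩ := hy
    exact ⟨h2, by rw [e1, e2]; exact hxy⟩
  · rintro ⟨h, hlt⟩
    exact ⟨w[i]'(by omega), by rw [List.getElem?_eq_getElem (by omega)]; rfl,
      w[i + 1]'h, by rw [List.getElem?_eq_getElem h]; rfl, hlt⟩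

lemma ascAt_lt {w : List (Fin n)} {i : ℕ} (h : AscAt w i) : i + 1 < w.length := by
  rw [ascAt_iff] at h
  exact h.1

lemma ascAt_append_left {u v : List (Fin n)} {i : ℕ} (h : i + 1 < u.length) :
    AscAt (u ++ v) i ↔ AscAt u i := by
  unfold AscAt
  rw [List.getElem?_append, if_pos (by omega), List.getElem?_append, if_pos h]

lemma ascAt_append_right {u v : List (Fin n)} {i : ℕ} (h : u.length ≤ i) :
    AscAt (u ++ v) i ↔ AscAt v (i - u.length) := by
  unfold AscAt
  rw [List.getElem?_append_right h, List.getElem?_append_right (by omega)]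
  have : i + 1 - u.length = i - u.length + 1 := by omega
  rw [this]

lemma ascAt_take {w : List (Fin n)} {k i : ℕ} :
    AscAt (w.take k) i ↔ i + 1 < k ∧ AscAt w i := by
  unfold AscAt
  rcases lt_or_ge (i+1) k with h | h
  · rw [List.getElem?_take, if_pos (by omega), List.getElem?_take, if_pos h]
    tauto
  · have h2 : (w.take k)[i + 1]? = none := by
      rw [List.getElem?_take, if_neg (by omega)]
    rw [h2]
    constructor
    · rintro ⟨x, hx, y, hy, -⟩
      simp at hy
    · rintro ⟨h1, -⟩
      omega

lemma ascAt_drop {w : List (Fin n)} {k t : ℕ} :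
    AscAt (w.drop k) t ↔ AscAt w (k + t) := by
  unfold AscAt
  rw [List.getElem?_drop, List.getElem?_drop]
  have : k + (t + 1) = k + t + 1 := by omega
  rw [this]

lemma chain'_desc_iff {w : List (Fin n)} :
    w.Chain' (fun a b => b ≤ a) ↔ ∀ i, ¬ AscAt w i := by
  rw [List.chain'_iff_get]
  constructor
  · intro h i hasc
    rw [ascAt_iff] at hasc
    obtain ⟨hlt, hxy⟩ := hasc
    have := h i (by omega)
    simp only [List.get_eq_getElem] at this
    exact absurd hxy (not_lt.2 this)
  · intro h i hlt
    by_contra hc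
    push_neg at hc
    apply h i
    rw [ascAt_iff]
    refine ⟨by omega, ?_⟩
    simp only [List.get_eq_getElem] at hc
    exact hc
end Asc

section Sub
variable {n : ℕ}

lemma length_eq_sum_count (w : List (Fin n)) : w.length = ∑ j, w.count j := by
  classical
  have h2 := Multiset.sum_count_eq_card (s := (Finset.univ : Finset (Fin n)))
    (m := (w : Multiset (Fin n))) (fun a _ => Finset.mem_univ a)
  simp only [Multiset.coe_count, Multiset.coe_card] at h2
  rw [← h2]

open Classical in
noncomputable def subC (n : ℕ) (m : Fin n → ℕ) (S : Finset ℕ) : ℕ :=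
  ((contW n m).filter (fun w => ∀ i ∉ S, ¬ AscAt w i)).card

lemma subC_base {m : Fin n → ℕ} {S : Finset ℕ}
    (hS : ∀ i ∈ S, (∑ j, m j) ≤ i + 1) : subC n m S = 1 := by
  classical
  rw [subC, Finset.card_eq_one]
  refine ⟨descW n m, ?_⟩
  ext w
  simp only [Finset.mem_filter, Finset.mem_singleton]
  constructor
  · rintro ⟨hw, hna⟩
    apply desc_unique hw
    rw [chain'_desc_iff]
    intro i hasc
    have hlen : w.length = ∑ j, m j := length_of_mem_contW hw
    by_cases hi : i ∈ S
    · have h1 := hS i hi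
      have h2 := ascAt_lt hasc
      omega
    · exact hna i hi hasc
  · rintro rfl
    exact ⟨descW_mem m, fun i _ => (chain'_desc_iff.1 (descW_sorted m)) i⟩

open Classical in
noncomputable def SubCont (m : Fin n → ℕ) (l : ℕ) : Finset (Fin n → ℕ) :=
  (Fintype.piFinset fun j => Finset.range (m j + 1)).filter (fun m1 => ∑ j, m1 j = l)

lemma mem_SubCont {m m1 : Fin n → ℕ} {l : ℕ} :
    m1 ∈ SubCont m l ↔ (∀ j, m1 j ≤ m j) ∧ ∑ j, m1 j = l := by
  classical
  simp [SubCont, Fintype.mem_piFinset, Nat.lt_succ_iff]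

lemma subC_step {m : Fin n → ℕ} {S : Finset ℕ} {i0 : ℕ}
    (hi0S : i0 ∈ S) (hi0 : i0 + 2 ≤ ∑ j, m j)
    (hmax : ∀ i ∈ S, i0 < i → (∑ j, m j) ≤ i + 1) :
    subC n m S = ∑ m1 ∈ SubCont m (i0 + 1), subC n m1 (S.erase i0) := by
  classical
  unfold subC
  rw [← Finset.card_sigma]
  apply Finset.card_nbij'
    (i := fun w => ⟨fun j => (w.take (i0 + 1)).count j, w.take (i0 + 1)⟩)
    (j := fun p => p.2 ++ descW n (fun j => m j - p.1 j))
  · -- forward maps to sigma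
    intro w hw
    simp only [Finset.mem_coe, Finset.mem_filter] at hw
    obtain ⟨hwm, hna⟩ := hw
    have hlen : w.length = ∑ j, m j := length_of_mem_contW hwm
    rw [Finset.mem_coe, Finset.mem_sigma]
    dsimp only
    constructor
    · rw [mem_SubCont]
      refine ⟨fun j => le_trans ((w.take_sublist (i0+1)).count_le j)
        (le_of_eq (mem_contW.1 hwm j)), ?_⟩
      rw [← length_eq_sum_count, List.length_take]
      omega
    · rw [Finset.mem_filter]
      refine ⟨mem_contW.2 (fun j => rfl), ?_⟩
      intro i hi hasc
      rw [ascAt_take] at hasc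
      obtain ⟨hik, hasc⟩ := hasc
      have hiS : i ∉ S := by
        intro hiS
        exact (Finset.mem_erase.2 ⟨by omega, hiS⟩) |> hi
      exact hna i hiS hasc
  · -- backward maps to big set
    rintro ⟨m1, w1⟩ hp
    dsimp only
    rw [Finset.mem_coe, Finset.mem_sigma] at hp
    dsimp only at hp
    obtain ⟨hm1, hw1f⟩ := hp
    rw [mem_SubCont] at hm1
    rw [Finset.mem_filter] at hw1f
    obtain ⟨hw1, hna1⟩ := hw1f
    obtain ⟨hle, hsum⟩ := hm1
    have hlen1 : w1.length = i0 + 1 := by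
      rw [length_of_mem_contW hw1, hsum]
    set d := descW n (fun j => m j - m1 j) with hd
    have hdm : d ∈ contW n (fun j => m j - m1 j) := descW_mem _
    simp only [Finset.mem_coe, Finset.mem_filter]
    constructor
    · rw [mem_contW]
      intro j
      rw [List.count_append, mem_contW.1 hw1 j, mem_contW.1 hdm j]
      have := hle j
      omega
    · intro i hiS hasc
      rcases lt_trichotomy i i0 with hlt | heq | hgt
      · rw [ascAt_append_left (by omega)] at hasc
        exact hna1 i (fun hmem => hiS (Finset.mem_of_mem_erase hmem)) hasc
      · exact hiS (heq ▸ hi0S)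
      · rw [ascAt_append_right (by omega)] at hasc
        exact (chain'_desc_iff.1 (descW_sorted _)) _ hasc
  · -- left inverse
    intro w hw
    simp only [Finset.mem_coe, Finset.mem_filter] at hw
    obtain ⟨hwm, hna⟩ := hw
    have hlen : w.length = ∑ j, m j := length_of_mem_contW hwm
    have hdrop : w.drop (i0 + 1) = descW n (fun j => m j - (w.take (i0 + 1)).count j) := by
      apply desc_unique
      · rw [mem_contW]
        intro j
        have hsplit : (w.take (i0+1)).count j + (w.drop (i0+1)).count j = m j := by
          rw [← List.count_append, List.take_append_drop]
          exact mem_contW.1 hwm j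
        omega
      · rw [chain'_desc_iff]
        intro t hasc
        rw [ascAt_drop] at hasc
        have hlt := ascAt_lt hasc
        by_cases hmem : (i0 + 1 + t) ∈ S
        · have := hmax _ hmem (by omega)
          omega
        · exact hna _ hmem hasc
    conv_rhs => rw [← List.take_append_drop (i0 + 1) w]
    rw [hdrop]
  · -- right inverse
    rintro ⟨m1, w1⟩ hp
    dsimp only
    rw [Finset.mem_coe, Finset.mem_sigma] at hp
    dsimp only at hp
    obtain ⟨hm1, hw1f⟩ := hp
    rw [mem_SubCont] at hm1
    rw [Finset.mem_filter] at hw1f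
    obtain ⟨hw1, -⟩ := hw1f
    obtain ⟨-, hsum⟩ := hm1
    have hlen1 : w1.length = i0 + 1 := by
      rw [length_of_mem_contW hw1, hsum]
    have htake : (w1 ++ descW n (fun j => m j - m1 j)).take (i0 + 1) = w1 :=
      List.take_left' hlen1
    simp only [htake]
    have : (fun j => w1.count j) = m1 := funext (fun j => mem_contW.1 hw1 j)
    rw [this]
end Sub

section PermInv
variable {n : ℕ}

lemma subC_perm_aux (σ : Equiv.Perm (Fin n)) :
    ∀ (k : ℕ) (m : Fin n → ℕ) (S : Finset ℕ),
      (S ∩ Finset.range ((∑ j, m j) - 1)).card ≤ k →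
      subC n m S = subC n (m ∘ σ) S := by
  classical
  intro k
  induction k with
  | zero =>
    intro m S hk
    have hemp : S ∩ Finset.range ((∑ j, m j) - 1) = ∅ := Finset.card_eq_zero.1 (le_antisymm hk (Nat.zero_le _))
    have hsum : ∑ j, (m ∘ σ) j = ∑ j, m j := Equiv.sum_comp σ m
    have hbase : ∀ i ∈ S, (∑ j, m j) ≤ i + 1 := by
      intro i hi
      by_contra hc
      push_neg at hc
      have : i ∈ S ∩ Finset.range ((∑ j, m j) - 1) :=
        Finset.mem_inter.2 ⟨hi, Finset.mem_range.2 (by omega)⟩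
      rw [hemp] at this
      exact absurd this (Finset.notMem_empty i)
    rw [subC_base hbase, subC_base (by rw [hsum]; exact hbase)]
  | succ k ih =>
    intro m S hk
    have hsum : ∑ j, (m ∘ σ) j = ∑ j, m j := Equiv.sum_comp σ m
    by_cases hemp : S ∩ Finset.range ((∑ j, m j) - 1) = ∅
    · have hbase : ∀ i ∈ S, (∑ j, m j) ≤ i + 1 := by
        intro i hi
        by_contra hc
        push_neg at hc
        have : i ∈ S ∩ Finset.range ((∑ j, m j) - 1) :=
          Finset.mem_inter.2 ⟨hi, Finset.mem_range.2 (by omega)⟩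
        rw [hemp] at this
        exact absurd this (Finset.notMem_empty i)
      rw [subC_base hbase, subC_base (by rw [hsum]; exact hbase)]
    · have hne : (S ∩ Finset.range ((∑ j, m j) - 1)).Nonempty :=
        Finset.nonempty_of_ne_empty hemp
      obtain ⟨i0, hi0S, hi0lt, hi0max⟩ :
          ∃ i0, i0 ∈ S ∧ i0 < (∑ j, m j) - 1 ∧
            ∀ x ∈ S ∩ Finset.range ((∑ j, m j) - 1), x ≤ i0 := by
        refine ⟨(S ∩ Finset.range ((∑ j, m j) - 1)).max' hne, ?_, ?_, ?_⟩
        · exact Finset.mem_inter.1 ((S ∩ Finset.range ((∑ j, m j) - 1)).max'_mem hne) |>.1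
        · exact Finset.mem_range.1 ((Finset.mem_inter.1
            ((S ∩ Finset.range ((∑ j, m j) - 1)).max'_mem hne)).2)
        · exact fun x hx => Finset.le_max' _ x hx
      have hi02 : i0 + 2 ≤ ∑ j, m j := by omega
      have hmax : ∀ i ∈ S, i0 < i → (∑ j, m j) ≤ i + 1 := by
        intro i hiS hgt
        by_contra hc
        push_neg at hc
        have hmem : i ∈ S ∩ Finset.range ((∑ j, m j) - 1) :=
          Finset.mem_inter.2 ⟨hiS, Finset.mem_range.2 (by omega)⟩
        have := hi0max i hmem
        omega
      have hstep1 := subC_step (m := m) hi0S hi02 hmax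
      have hstep2 := subC_step (m := m ∘ σ) hi0S (by omega) (by rw [hsum]; exact hmax)
      rw [hstep1, hstep2]
      have hih : ∀ m1 ∈ SubCont m (i0 + 1), subC n m1 (S.erase i0) = subC n (m1 ∘ σ) (S.erase i0) := by
        intro m1 hm1
        rw [mem_SubCont] at hm1
        obtain ⟨-, hm1s⟩ := hm1
        apply ih
        rw [hm1s]
        have hsub : (S.erase i0) ∩ Finset.range ((∑ j, m1 j) - 1)
            ⊆ (S ∩ Finset.range ((∑ j, m j) - 1)).erase i0 := by
          intro x hx
          rw [Finset.mem_inter, Finset.mem_erase, Finset.mem_range] at hx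
          obtain ⟨⟨hx1, hx2⟩, hx3⟩ := hx
          rw [Finset.mem_erase, Finset.mem_inter, Finset.mem_range]
          exact ⟨hx1, hx2, by omega⟩
        have hsub2 : (S.erase i0) ∩ Finset.range (i0 + 1 - 1)
            ⊆ (S.erase i0) ∩ Finset.range ((∑ j, m1 j) - 1) := by
          rw [hm1s]
        have h1 := Finset.card_le_card (hsub2.trans hsub)
        have h2 : ((S ∩ Finset.range ((∑ j, m j) - 1)).erase i0).card
            = (S ∩ Finset.range ((∑ j, m j) - 1)).card - 1 := Finset.card_erase_of_mem
          (Finset.mem_inter.2 ⟨hi0S, Finset.mem_range.2 hi0lt⟩)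
        omega
      rw [Finset.sum_congr rfl hih]
      apply Finset.sum_nbij' (i := fun m1 => m1 ∘ σ) (j := fun m2 => m2 ∘ σ.symm)
      · intro m1 hm1
        rw [mem_SubCont] at hm1 ⊢
        refine ⟨fun j => hm1.1 (σ j), ?_⟩
        calc ∑ j, (m1 ∘ σ) j = ∑ j, m1 j := Equiv.sum_comp σ m1
          _ = i0 + 1 := hm1.2
      · intro m2 hm2
        rw [mem_SubCont] at hm2 ⊢
        constructor
        · intro j
          have := hm2.1 (σ.symm j)
          simpa using this
        · calc ∑ j, (m2 ∘ σ.symm) j = ∑ j, m2 j := Equiv.sum_comp σ.symm m2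
            _ = i0 + 1 := hm2.2
      · intro m1 hm1
        funext j
        simp
      · intro m2 hm2
        funext j
        simp
      · intro m1 hm1
        rfl

lemma subC_perm (σ : Equiv.Perm (Fin n)) (m : Fin n → ℕ) (S : Finset ℕ) :
    subC n m S = subC n (m ∘ σ) S :=
  subC_perm_aux σ _ m S le_rfl

lemma exists_comp_eq {N : ℕ} (f g : Fin N → ℕ)
    (h : ∀ c, (Finset.univ.filter (fun j => f j = c)).card
            = (Finset.univ.filter (fun j => g j = c)).card) :
    ∃ σ : Equiv.Perm (Fin N), g = f ∘ σ := by
  classical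
  have E : ∀ c, {x // x ∈ Finset.univ.filter (fun j : Fin N => g j = c)}
      ≃ {x // x ∈ Finset.univ.filter (fun j : Fin N => f j = c)} :=
    fun c => Finset.equivOfCardEq (h c).symm
  set s : Fin N → Fin N := fun i => ((E (g i)) ⟨i, by simp⟩ : {x // x ∈ _}).1 with hs
  have key : ∀ (c : ℕ) (i : Fin N) (hi : g i = c),
      s i = ((E c) ⟨i, by simp [hi]⟩ : {x // x ∈ _}).1 := by
    intro c i hi
    subst hi
    rfl
  have hfs : ∀ i, f (s i) = g i := by
    intro i
    have := ((E (g i)) ⟨i, by simp⟩).2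
    simp only [Finset.mem_filter] at this
    exact this.2
  have hinj : Function.Injective s := by
    intro i i' he
    have hg : g i' = g i := by rw [← hfs i, ← hfs i', he]
    rw [key (g i) i rfl, key (g i) i' hg] at he
    have := (E (g i)).injective (Subtype.ext he)
    exact congrArg Subtype.val this
  obtain ⟨σ, hσ⟩ : ∃ σ : Equiv.Perm (Fin N), ∀ i, σ i = s i :=
    ⟨Equiv.ofBijective s (Finite.injective_iff_bijective.1 hinj), fun i => rfl⟩
  refine ⟨σ, funext fun i => ?_⟩
  simp only [Function.comp_apply, hσ, hfs]
end PermInv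

section Mobius
variable {n : ℕ}

open Classical in
noncomputable def ascFinset (w : List (Fin n)) : Finset ℕ :=
  (Finset.range w.length).filter (AscAt w)

lemma mem_ascFinset {w : List (Fin n)} {i : ℕ} : i ∈ ascFinset w ↔ AscAt w i := by
  classical
  simp only [ascFinset, Finset.mem_filter, Finset.mem_range]
  constructor
  · exact fun h => h.2
  · intro h
    exact ⟨by have := ascAt_lt h; omega, h⟩

def goodF (r L : ℕ) (T : Finset ℕ) : Prop :=
  ¬ ∃ i, i + r ≤ L ∧ ∀ t, t + 1 < r → (i + t) ∈ T

lemma chain'_lt_iff_ascAt {l : List (Fin n)} :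
    l.Chain' (· < ·) ↔ ∀ t, t + 1 < l.length → AscAt l t := by
  rw [List.chain'_iff_get]
  constructor
  · intro h t ht
    rw [ascAt_iff]
    refine ⟨ht, ?_⟩
    have := h t (by omega)
    simpa using this
  · intro h t ht
    have := (ascAt_iff.1 (h t (by omega))).2
    simpa using this

lemma avoids_iff_good {r : ℕ} {w : List (Fin n)} :
    AvoidsInc r w ↔ goodF r w.length (ascFinset w) := by
  rw [avoidsInc_iff]
  unfold goodF
  have hseg : ∀ i, i + r ≤ w.length →
      (((w.drop i).take r).Chain' (· < ·) ↔ ∀ t, t + 1 < r → (i + t) ∈ ascFinset w) := by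
    intro i hi
    rw [chain'_lt_iff_ascAt]
    have hlen : ((w.drop i).take r).length = r := by
      simp only [List.length_take, List.length_drop]
      omega
    rw [hlen]
    constructor
    · intro h t ht
      rw [mem_ascFinset]
      have h2 := h t ht
      rw [ascAt_take, ascAt_drop] at h2
      exact h2.2
    · intro h t ht
      rw [ascAt_take, ascAt_drop]
      exact ⟨ht, mem_ascFinset.1 (h t ht)⟩
  constructor
  · rintro h ⟨i, hi, hall⟩
    exact (h i hi) ((hseg i hi).2 hall)
  · intro h i hi hc
    exact h ⟨i, hi, (hseg i hi).1 hc⟩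

lemma noAscOut_iff {S : Finset ℕ} {w : List (Fin n)} :
    (∀ i ∉ S, ¬ AscAt w i) ↔ ascFinset w ⊆ S := by
  constructor
  · intro h i hi
    rw [mem_ascFinset] at hi
    by_contra hc
    exact h i hc hi
  · intro h i hiS hasc
    exact hiS (h (mem_ascFinset.2 hasc))

open Classical in
noncomputable def exactC (n : ℕ) (m : Fin n → ℕ) (T : Finset ℕ) : ℕ :=
  ((contW n m).filter (fun w => ascFinset w = T)).card

open Classical in
lemma Fc_eq_sum_exact (r : ℕ) (m : Fin n → ℕ) :
    Fc r n m = ∑ T ∈ (Finset.range (∑ j, m j)).powerset.filter (goodF r (∑ j, m j)),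
      exactC n m T := by
  classical
  rw [Fc]
  rw [Finset.card_eq_sum_card_fiberwise (f := fun w => ascFinset w)
    (t := (Finset.range (∑ j, m j)).powerset.filter (goodF r (∑ j, m j)))]
  · apply Finset.sum_congr rfl
    intro T hT
    rw [Finset.mem_filter, Finset.mem_powerset] at hT
    rw [exactC]
    congr 1
    rw [Finset.filter_filter]
    apply Finset.filter_congr
    intro w hw
    have hlen : w.length = ∑ j, m j := length_of_mem_contW hw
    constructor
    · rintro ⟨-, h2⟩; exact h2
    · rintro h2
      refine ⟨?_, h2⟩
      rw [avoids_iff_good, hlen, h2]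
      exact hT.2
  · intro w hw
    rw [Finset.mem_coe, Finset.mem_filter] at hw
    have hlen : w.length = ∑ j, m j := length_of_mem_contW hw.1
    rw [Finset.mem_coe, Finset.mem_filter, Finset.mem_powerset]
    constructor
    · intro i hi
      rw [mem_ascFinset] at hi
      rw [Finset.mem_range]
      have := ascAt_lt hi
      omega
    · rw [← hlen]
      exact avoids_iff_good.1 hw.2

lemma neg_one_pow_sub {d u : ℕ} (h : u ≤ d) :
    ((-1 : ℤ)) ^ (d - u) = (-1) ^ d * (-1) ^ u := by
  have h1 : d - u + (u + u) = d + u := by omega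
  have h2 : ((-1 : ℤ)) ^ (d - u + (u + u)) = (-1) ^ (d + u) := by rw [h1]
  rw [pow_add, pow_add, pow_add] at h2
  have h3 : ((-1 : ℤ)) ^ u * (-1) ^ u = 1 := by
    rw [← pow_add]
    exact (neg_one_pow_eq_one_iff_even (by norm_num)).2 (Even.add_self u)
  rw [h3, mul_one] at h2
  exact h2

lemma indicator_mobius (A T : Finset ℕ) :
    ∑ S ∈ T.powerset, (-1:ℤ)^((T \ S).card) * (if A ⊆ S then 1 else 0)
      = if A = T then 1 else 0 := by
  classical
  by_cases hAT : A ⊆ T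
  · have hrw : ∀ S ∈ T.powerset, (-1:ℤ)^((T \ S).card) * (if A ⊆ S then 1 else 0)
        = if A ⊆ S then (-1:ℤ)^((T \ S).card) else 0 := by
      intro S _
      split_ifs <;> ring
    rw [Finset.sum_congr rfl hrw, ← Finset.sum_filter]
    have hbij : ∑ S ∈ T.powerset.filter (fun S => A ⊆ S), (-1:ℤ)^((T \ S).card)
        = ∑ U ∈ (T \ A).powerset, (-1:ℤ)^(((T \ A).card - U.card)) := by
      apply Finset.sum_nbij' (i := fun S => S \ A) (j := fun U => A ∪ U)
      · intro S hS
        rw [Finset.mem_filter, Finset.mem_powerset] at hS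
        rw [Finset.mem_powerset]
        exact Finset.sdiff_subset_sdiff hS.1 (le_refl _)
      · intro U hU
        rw [Finset.mem_powerset] at hU
        rw [Finset.mem_filter, Finset.mem_powerset]
        exact ⟨Finset.union_subset hAT (hU.trans Finset.sdiff_subset),
          Finset.subset_union_left⟩
      · intro S hS
        rw [Finset.mem_filter] at hS
        exact Finset.union_sdiff_of_subset hS.2
      · intro U hU
        rw [Finset.mem_powerset] at hU
        ext x
        simp only [Finset.mem_sdiff, Finset.mem_union]
        constructor
        · rintro ⟨h1 | h1, h2⟩
          · exact absurd h1 h2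
          · exact h1
        · intro hx
          have hxA : x ∉ A := fun hA => (Finset.mem_sdiff.1 (hU hx)).2 hA
          exact ⟨Or.inr hx, hxA⟩
      · intro S hS
        rw [Finset.mem_filter, Finset.mem_powerset] at hS
        congr 1
        have hc1 : (T \ S).card + S.card = T.card :=
          Finset.card_sdiff_add_card_eq_card hS.1
        have hc2 : (S \ A).card + A.card = S.card :=
          Finset.card_sdiff_add_card_eq_card hS.2
        have hc3 : (T \ A).card + A.card = T.card :=
          Finset.card_sdiff_add_card_eq_card hAT
        have hc4 : (S \ A).card ≤ (T \ A).card :=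
          Finset.card_le_card (Finset.sdiff_subset_sdiff hS.1 (le_refl _))
        omega
    rw [hbij]
    have hval : ∀ U ∈ (T \ A).powerset,
        (-1:ℤ)^(((T \ A).card - U.card)) = (-1)^(T \ A).card * (-1)^U.card :=
      fun U hU => neg_one_pow_sub (Finset.card_le_card (Finset.mem_powerset.1 hU))
    rw [Finset.sum_congr rfl hval, ← Finset.mul_sum,
      Finset.sum_powerset_neg_one_pow_card]
    by_cases hD : T \ A = ∅
    · have hAeqT : A = T :=
        le_antisymm hAT (Finset.sdiff_eq_empty_iff_subset.1 hD)
      rw [if_pos hD, if_pos hAeqT, hD]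
      simp
    · have hAneT : A ≠ T := by
        rintro rfl
        exact hD (Finset.sdiff_self A)
      rw [if_neg hD, if_neg hAneT, mul_zero]
  · rw [if_neg (by rintro rfl; exact hAT (le_refl _))]
    apply Finset.sum_eq_zero
    intro S hS
    rw [Finset.mem_powerset] at hS
    rw [if_neg (fun h => hAT (h.trans hS)), mul_zero]

open Classical in
lemma exact_eq_subC_sum (m : Fin n → ℕ) (T : Finset ℕ) :
    (exactC n m T : ℤ)
      = ∑ S ∈ T.powerset, (-1:ℤ)^((T \ S).card) * (subC n m S : ℤ) := by
  classical
  have hsub : ∀ S : Finset ℕ, (subC n m S : ℤ)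
      = ∑ w ∈ contW n m, (if ascFinset w ⊆ S then (1:ℤ) else 0) := by
    intro S
    rw [subC, Finset.card_filter, Nat.cast_sum]
    apply Finset.sum_congr rfl
    intro w hw
    rw [apply_ite (Nat.cast : ℕ → ℤ)]
    norm_num
    exact if_congr noAscOut_iff rfl rfl
  have hstep : ∀ S ∈ T.powerset, (-1:ℤ)^((T \ S).card) * (subC n m S : ℤ)
      = ∑ w ∈ contW n m, (-1:ℤ)^((T \ S).card) * (if ascFinset w ⊆ S then 1 else 0) := by
    intro S _
    rw [hsub S, Finset.mul_sum]
  rw [Finset.sum_congr rfl hstep, Finset.sum_comm]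
  rw [exactC, Finset.card_filter, Nat.cast_sum]
  apply Finset.sum_congr rfl
  intro w hw
  rw [indicator_mobius (ascFinset w) T, apply_ite (Nat.cast : ℕ → ℤ)]
  norm_num

lemma Fc_perm (r : ℕ) (m : Fin n → ℕ) (σ : Equiv.Perm (Fin n)) :
    Fc r n m = Fc r n (m ∘ σ) := by
  classical
  have hsum : ∑ j, (m ∘ σ) j = ∑ j, m j := Equiv.sum_comp σ m
  suffices h : (Fc r n m : ℤ) = (Fc r n (m ∘ σ) : ℤ) by exact_mod_cast h
  rw [Fc_eq_sum_exact r m, Fc_eq_sum_exact r (m ∘ σ), hsum]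
  push_cast
  apply Finset.sum_congr rfl
  intro T hT
  rw [exact_eq_subC_sum, exact_eq_subC_sum]
  apply Finset.sum_congr rfl
  intro S hS
  rw [subC_perm σ m S]
end Mobius

section Pad

lemma avoidsInc_map {r n n' : ℕ} (f : Fin n → Fin n') (hf : StrictMono f) (w : List (Fin n)) :
    AvoidsInc r (w.map f) ↔ AvoidsInc r w := by
  rw [avoidsInc_iff, avoidsInc_iff, List.length_map]
  apply forall_congr'
  intro i
  apply imp_congr Iff.rfl
  rw [← List.map_drop, ← List.map_take, List.chain'_map]
  constructor
  · intro h hc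
    exact h (hc.imp (fun a b hab => hf hab))
  · intro h hc
    exact h (hc.imp (fun a b hab => hf.lt_iff_lt.1 hab))

lemma Fc_pad {r : ℕ} (hr : 1 ≤ r) {n n' : ℕ} (h : n ≤ n') (m : Fin n → ℕ) :
    Fc r n m = Fc r n' (fun i => if h2 : (i : ℕ) < n then m ⟨i, h2⟩ else 0) := by
  classical
  rcases Nat.eq_zero_or_pos n with rfl | hn
  · -- n = 0
    unfold Fc
    have hb1 : contW 0 m = {[]} := by
      ext w
      rw [mem_contW, Finset.mem_singleton]
      constructor
      · intro hw
        cases w with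
        | nil => rfl
        | cons a t => exact a.elim0
      · rintro rfl
        intro j
        exact j.elim0
    have hb2 : contW n' (fun i => if h2 : (i : ℕ) < 0 then m ⟨i, h2⟩ else 0) = {[]} := by
      ext w
      rw [mem_contW, Finset.mem_singleton]
      constructor
      · intro hw
        cases w with
        | nil => rfl
        | cons a t =>
          have := hw a
          simp at this
      · rintro rfl
        intro j
        simp
    rw [hb1, hb2, Finset.filter_singleton, Finset.filter_singleton,
      if_pos (avoidsInc_nil hr), if_pos (avoidsInc_nil hr)]
    simp
  · set g : Fin n' → Fin n := fun x => if h2 : (x : ℕ) < n then ⟨x, h2⟩ else ⟨0, hn⟩ with hg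
    set m' : Fin n' → ℕ := fun i => if h2 : (i : ℕ) < n then m ⟨i, h2⟩ else 0 with hm'
    unfold Fc
    apply Finset.card_nbij' (i := fun w => w.map (Fin.castLE h)) (j := fun w' => w'.map g)
    · intro w hw
      rw [Finset.mem_coe, Finset.mem_filter] at hw ⊢
      obtain ⟨hwm, hav⟩ := hw
      constructor
      · rw [mem_contW]
        intro j'
        by_cases hj : (j' : ℕ) < n
        · have hj' : j' = Fin.castLE h ⟨j', hj⟩ := by
            apply Fin.ext
            rfl
          rw [hj', List.count_map_of_injective _ _ (Fin.castLE_injective h)]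
          simp only [hm', Fin.coe_castLE, dif_pos hj]
          exact mem_contW.1 hwm _
        · have hcz : (w.map (Fin.castLE h)).count j' = 0 := by
            rw [List.count_eq_zero]
            intro hmem
            rw [List.mem_map] at hmem
            obtain ⟨y, -, hy⟩ := hmem
            exact hj (by rw [← hy]; exact y.2)
          rw [hcz]
          simp only [hm', dif_neg hj]
      · exact (avoidsInc_map _ (Fin.strictMono_castLE h) w).2 hav
    · intro w' hw'
      rw [Finset.mem_coe, Finset.mem_filter] at hw' ⊢
      obtain ⟨hwm, hav⟩ := hw'
      have helt : ∀ x ∈ w', (x : ℕ) < n := by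
        intro x hx
        by_contra hc
        have hcount : w'.count x ≠ 0 := fun h0 => (List.count_eq_zero.1 h0) hx
        rw [mem_contW.1 hwm x, hm'] at hcount
        simp only [dif_neg hc] at hcount
        exact hcount rfl
      have hmap : (w'.map g).map (Fin.castLE h) = w' := by
        rw [List.map_map]
        calc w'.map (Fin.castLE h ∘ g) = w'.map id := by
              apply List.map_congr_left
              intro x hx
              simp only [Function.comp_apply, hg, dif_pos (helt x hx)]
              apply Fin.ext
              rfl
          _ = w' := List.map_id _
      constructor
      · rw [mem_contW]
        intro j
        have h5 : (w'.map g).count j = w'.count (Fin.castLE h j) := by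
          conv_rhs => rw [← hmap]
          rw [List.count_map_of_injective _ _ (Fin.castLE_injective h)]
        rw [h5, mem_contW.1 hwm _]
        simp only [hm', Fin.coe_castLE, dif_pos j.2, Fin.eta]
      · rw [← avoidsInc_map (Fin.castLE h) (Fin.strictMono_castLE h), hmap]
        exact hav
    · intro w hw
      dsimp only
      rw [List.map_map]
      calc w.map (g ∘ Fin.castLE h) = w.map id := by
            apply List.map_congr_left
            intro x hx
            simp only [Function.comp_apply, hg, Fin.coe_castLE, dif_pos x.2]
            rfl
        _ = w := List.map_id _
    · intro w' hw'
      rw [Finset.mem_coe, Finset.mem_filter] at hw'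
      obtain ⟨hwm, -⟩ := hw'
      have helt : ∀ x ∈ w', (x : ℕ) < n := by
        intro x hx
        by_contra hc
        have hcount : w'.count x ≠ 0 := fun h0 => (List.count_eq_zero.1 h0) hx
        rw [mem_contW.1 hwm x, hm'] at hcount
        simp only [dif_neg hc] at hcount
        exact hcount rfl
      dsimp only
      rw [List.map_map]
      calc w'.map (Fin.castLE h ∘ g) = w'.map id := by
            apply List.map_congr_left
            intro x hx
            simp only [Function.comp_apply, hg, dif_pos (helt x hx)]
            apply Fin.ext
            rfl
        _ = w' := List.map_id _
end Pad

section Sym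

lemma card_fin_lt {N a : ℕ} (h : a ≤ N) :
    ((Finset.univ : Finset (Fin N)).filter (fun (j : Fin N) => (j : ℕ) < a)).card = a := by
  classical
  have hb : ((Finset.univ : Finset (Fin N)).filter (fun (j : Fin N) => (j : ℕ) < a)).card
      = (Finset.range a).card := by
    apply Finset.card_bij (i := fun (j : Fin N)
      (_ : j ∈ (Finset.univ : Finset (Fin N)).filter (fun (j : Fin N) => (j : ℕ) < a)) => (j : ℕ))
    · intro x hx
      rw [Finset.mem_filter] at hx
      exact Finset.mem_range.2 hx.2
    · intro x hx y hy hxy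
      exact Fin.ext hxy
    · intro k hk
      rw [Finset.mem_range] at hk
      exact ⟨⟨k, by omega⟩, Finset.mem_filter.2 ⟨Finset.mem_univ _, hk⟩, rfl⟩
  rw [hb, Finset.card_range]

lemma Fc_fibers_le {r : ℕ} (hr : 1 ≤ r) {n1 n2 : ℕ} (hle : n1 ≤ n2)
    (m1 : Fin n1 → ℕ) (m2 : Fin n2 → ℕ)
    (h : ∀ c, 1 ≤ c → (Finset.univ.filter (fun j => m1 j = c)).card
        = (Finset.univ.filter (fun j => m2 j = c)).card) :
    Fc r n1 m1 = Fc r n2 m2 := by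
  classical
  rw [Fc_pad hr hle m1]
  set m1' : Fin n2 → ℕ := fun i => if h2 : (i : ℕ) < n1 then m1 ⟨i, h2⟩ else 0 with hm1'
  have hfib : ∀ c, 1 ≤ c → (Finset.univ.filter (fun j : Fin n2 => m1' j = c)).card
      = (Finset.univ.filter (fun j : Fin n1 => m1 j = c)).card := by
    intro c hc
    apply Finset.card_bij (i := fun (j : Fin n2) hj => (⟨(j : ℕ), by
      rw [Finset.mem_filter] at hj
      by_contra hcon
      have : m1' j = 0 := by simp only [hm1', dif_neg hcon]
      omega⟩ : Fin n1))
    · intro x hx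
      rw [Finset.mem_filter] at hx ⊢
      refine ⟨Finset.mem_univ _, ?_⟩
      have hlt : (x : ℕ) < n1 := by
        by_contra hcon
        have : m1' x = 0 := by simp only [hm1', dif_neg hcon]
        omega
      have := hx.2
      simp only [hm1', dif_pos hlt] at this
      exact this
    · intro x hx y hy hxy
      have := congrArg (fun z : Fin n1 => (z : ℕ)) hxy
      exact Fin.ext this
    · intro j hj
      rw [Finset.mem_filter] at hj
      refine ⟨Fin.castLE hle j, Finset.mem_filter.2 ⟨Finset.mem_univ _, ?_⟩, ?_⟩
      · simp only [hm1', Fin.coe_castLE, dif_pos j.2, Fin.eta]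
        exact hj.2
      · apply Fin.ext
        rfl
  have hAll : ∀ c, (Finset.univ.filter (fun j : Fin n2 => m2 j = c)).card
      = (Finset.univ.filter (fun j : Fin n2 => m1' j = c)).card := by
    intro c
    rcases Nat.eq_zero_or_pos c with rfl | hc
    · set Mx := (∑ j, m1' j) + (∑ j, m2 j) with hMx
      have hne : ∀ (f : Fin n2 → ℕ), (∀ j, f j ≤ Mx) →
          (Finset.univ.filter (fun j => f j ≠ 0)).card
            = ∑ c ∈ Finset.Icc 1 Mx, (Finset.univ.filter (fun j => f j = c)).card := by
        intro f hf
        rw [Finset.card_eq_sum_card_fiberwise (f := f)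
          (t := Finset.Icc 1 Mx) (fun x hx => by
            rw [Finset.mem_coe, Finset.mem_filter] at hx
            rw [Finset.mem_coe, Finset.mem_Icc]
            exact ⟨by omega, hf x⟩)]
        apply Finset.sum_congr rfl
        intro c hc
        rw [Finset.mem_Icc] at hc
        congr 1
        rw [Finset.filter_filter]
        apply Finset.filter_congr
        intro j _
        constructor
        · rintro ⟨-, h2⟩; exact h2
        · intro h2; exact ⟨by omega, h2⟩
      have hb1 : ∀ j, m1' j ≤ Mx := by
        intro j
        have : m1' j ≤ ∑ j, m1' j := Finset.single_le_sum (fun i _ => Nat.zero_le _) (Finset.mem_univ j)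
        omega
      have hb2 : ∀ j, m2 j ≤ Mx := by
        intro j
        have : m2 j ≤ ∑ j, m2 j := Finset.single_le_sum (fun i _ => Nat.zero_le _) (Finset.mem_univ j)
        omega
      have hne1 := hne m1' hb1
      have hne2 := hne m2 hb2
      have hsum : ∑ c ∈ Finset.Icc 1 Mx, (Finset.univ.filter (fun j => m1' j = c)).card
          = ∑ c ∈ Finset.Icc 1 Mx, (Finset.univ.filter (fun j => m2 j = c)).card := by
        apply Finset.sum_congr rfl
        intro c hc
        rw [Finset.mem_Icc] at hc
        rw [hfib c hc.1, h c hc.1]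
      have ht1 := Finset.card_filter_add_card_filter_not
        (s := (Finset.univ : Finset (Fin n2))) (p := fun j => m1' j = 0)
      have ht2 := Finset.card_filter_add_card_filter_not
        (s := (Finset.univ : Finset (Fin n2))) (p := fun j => m2 j = 0)
      have hne1' : (Finset.univ.filter (fun j : Fin n2 => ¬ m1' j = 0)).card
          = (Finset.univ.filter (fun j : Fin n2 => m1' j ≠ 0)).card := rfl
      have hne2' : (Finset.univ.filter (fun j : Fin n2 => ¬ m2 j = 0)).card
          = (Finset.univ.filter (fun j : Fin n2 => m2 j ≠ 0)).card := rfl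
      omega
    · rw [hfib c hc, h c hc]
  obtain ⟨σ, hσ⟩ := exists_comp_eq m2 m1' hAll
  rw [hσ]
  exact (Fc_perm r m2 σ).symm

lemma Fc_fibers {r : ℕ} (hr : 1 ≤ r) {n1 n2 : ℕ}
    (m1 : Fin n1 → ℕ) (m2 : Fin n2 → ℕ)
    (h : ∀ c, 1 ≤ c → (Finset.univ.filter (fun j => m1 j = c)).card
        = (Finset.univ.filter (fun j => m2 j = c)).card) :
    Fc r n1 m1 = Fc r n2 m2 := by
  rcases le_total n1 n2 with hle | hle
  · exact Fc_fibers_le hr hle m1 m2 h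
  · exact (Fc_fibers_le hr hle m2 m1 (fun c hc => (h c hc).symm)).symm

lemma B_eq_Fc (r a b : ℕ) :
    B r a b = Fc r (a + b) (fun i => if (i : ℕ) < a then 2 else 1) :=
  wordAvoidCount_eq r _

lemma canon_fiber2 (a' b' : ℕ) :
    ((Finset.univ : Finset (Fin (a' + b'))).filter
      (fun (j : Fin (a' + b')) => (if (j : ℕ) < a' then 2 else 1) = 2)).card = a' := by
  classical
  have h1 : ((Finset.univ : Finset (Fin (a' + b'))).filter
      (fun (j : Fin (a' + b')) => (if (j : ℕ) < a' then 2 else 1) = 2))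
      = ((Finset.univ : Finset (Fin (a' + b'))).filter
          (fun (j : Fin (a' + b')) => (j : ℕ) < a')) := by
    apply Finset.filter_congr
    intro j _
    split_ifs with hj
    · simp [hj]
    · simp [hj]
  rw [h1, card_fin_lt (Nat.le_add_right a' b')]

lemma canon_fiber1 (a' b' : ℕ) :
    ((Finset.univ : Finset (Fin (a' + b'))).filter
      (fun (j : Fin (a' + b')) => (if (j : ℕ) < a' then 2 else 1) = 1)).card = b' := by
  classical
  have h1 : ((Finset.univ : Finset (Fin (a' + b'))).filter
      (fun (j : Fin (a' + b')) => (if (j : ℕ) < a' then 2 else 1) = 1))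
      = ((Finset.univ : Finset (Fin (a' + b'))).filter (fun (j : Fin (a' + b')) => ¬ ((j : ℕ) < a'))) := by
    apply Finset.filter_congr
    intro j _
    split_ifs with hj <;> simp [hj]
  rw [h1]
  have ht := Finset.card_filter_add_card_filter_not
    (s := (Finset.univ : Finset (Fin (a' + b')))) (p := fun (j : Fin (a' + b')) => (j : ℕ) < a')
  have h2 := card_fin_lt (Nat.le_add_right a' b' : a' ≤ a' + b')
  have h3 : (Finset.univ : Finset (Fin (a' + b'))).card = a' + b' := by
    rw [Finset.card_univ, Fintype.card_fin]
  omega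

lemma Fc_reduced {r : ℕ} (hr : 1 ≤ r) (a b : ℕ) (E : Finset (Fin (a + b))) :
    Fc r (a + b) (fun j => (if (j : ℕ) < a then 2 else 1) - (if j ∈ E then 1 else 0))
      = B r (a - (E.filter (fun (j : Fin (a + b)) => (j : ℕ) < a)).card)
          (b - (E.filter (fun (j : Fin (a + b)) => ¬ (j : ℕ) < a)).card
            + (E.filter (fun (j : Fin (a + b)) => (j : ℕ) < a)).card) := by
  classical
  set i1 := (E.filter (fun (j : Fin (a + b)) => (j : ℕ) < a)).card with hi1
  set i2 := (E.filter (fun (j : Fin (a + b)) => ¬ (j : ℕ) < a)).card with hi2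
  set A := (Finset.univ : Finset (Fin (a + b))).filter (fun (j : Fin (a + b)) => (j : ℕ) < a) with hA
  set Bs := (Finset.univ : Finset (Fin (a + b))).filter (fun (j : Fin (a + b)) => ¬ (j : ℕ) < a) with hBs
  have hAcard : A.card = a := card_fin_lt (Nat.le_add_right a b)
  have hBcard : Bs.card = b := by
    have ht := Finset.card_filter_add_card_filter_not
      (s := (Finset.univ : Finset (Fin (a + b)))) (p := fun (j : Fin (a + b)) => (j : ℕ) < a)
    have h3 : (Finset.univ : Finset (Fin (a + b))).card = a + b := by
      rw [Finset.card_univ, Fintype.card_fin]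
    have h4 : A.card + Bs.card = a + b := by
      rw [hA, hBs]
      omega
    omega
  have hi1le : i1 ≤ a := by
    have h5 : i1 ≤ A.card := by
      apply Finset.card_le_card
      intro x hx
      rw [Finset.mem_filter] at hx
      rw [hA, Finset.mem_filter]
      exact ⟨Finset.mem_univ _, hx.2⟩
    omega
  have hi2le : i2 ≤ b := by
    have h5 : i2 ≤ Bs.card := by
      apply Finset.card_le_card
      intro x hx
      rw [Finset.mem_filter] at hx
      rw [hBs, Finset.mem_filter]
      exact ⟨Finset.mem_univ _, hx.2⟩
    omega
  rw [B_eq_Fc]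
  apply Fc_fibers hr
  intro c hc
  have hm : ∀ j : Fin (a + b), ((if (j : ℕ) < a then 2 else 1) - (if j ∈ E then 1 else 0) : ℕ)
      = if (j : ℕ) < a then (if j ∈ E then 1 else 2) else (if j ∈ E then 0 else 1) := by
    intro j
    by_cases h1 : (j : ℕ) < a <;> by_cases h2 : j ∈ E <;> simp [h1, h2]
  rcases eq_or_ne c 2 with rfl | hc2
  · -- c = 2
    have hf2 : (Finset.univ.filter (fun j : Fin (a + b) =>
        ((if (j : ℕ) < a then 2 else 1) - (if j ∈ E then 1 else 0)) = 2)) = A \ E := by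
      ext j
      rw [Finset.mem_filter, Finset.mem_sdiff, hA, Finset.mem_filter]
      constructor
      · rintro ⟨-, h2⟩
        rw [hm j] at h2
        by_cases hja : (j : ℕ) < a <;> by_cases hjE : j ∈ E <;>
          simp [hja, hjE] at h2 ⊢
      · rintro ⟨⟨-, hja⟩, hjE⟩
        refine ⟨Finset.mem_univ _, ?_⟩
        rw [hm j]
        simp [hja, hjE]
    rw [hf2, canon_fiber2]
    have hcsd : (A \ E).card + (A ∩ E).card = A.card := Finset.card_sdiff_add_card_inter A E
    have hAE : (A ∩ E).card = i1 := by
      rw [hi1]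
      congr 1
      ext j
      simp only [Finset.mem_inter, Finset.mem_filter, hA, Finset.mem_univ, true_and]
      tauto
    omega
  rcases eq_or_ne c 1 with rfl | hc1
  · -- c = 1
    have hf1 : (Finset.univ.filter (fun j : Fin (a + b) =>
        ((if (j : ℕ) < a then 2 else 1) - (if j ∈ E then 1 else 0)) = 1))
        = (A ∩ E) ∪ (Bs \ E) := by
      ext j
      rw [Finset.mem_filter, Finset.mem_union, Finset.mem_inter, Finset.mem_sdiff,
        hA, hBs, Finset.mem_filter, Finset.mem_filter]
      constructor
      · rintro ⟨-, h2⟩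
        rw [hm j] at h2
        by_cases hja : (j : ℕ) < a <;> by_cases hjE : j ∈ E <;>
          simp [hja, hjE] at h2 ⊢
      · rintro (⟨⟨-, hja⟩, hjE⟩ | ⟨⟨-, hja⟩, hjE⟩)
        · exact ⟨Finset.mem_univ _, by rw [hm j]; simp [hja, hjE]⟩
        · exact ⟨Finset.mem_univ _, by rw [hm j]; simp [hja, hjE]⟩
    rw [hf1, canon_fiber1]
    have hdisj : Disjoint (A ∩ E) (Bs \ E) := by
      rw [Finset.disjoint_left]
      intro x hx hy
      rw [Finset.mem_inter, hA, Finset.mem_filter] at hx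
      rw [Finset.mem_sdiff, hBs, Finset.mem_filter] at hy
      exact hy.1.2 hx.1.2
    rw [Finset.card_union_of_disjoint hdisj]
    have hAE : (A ∩ E).card = i1 := by
      rw [hi1]
      congr 1
      ext j
      simp only [Finset.mem_inter, Finset.mem_filter, hA, Finset.mem_univ, true_and]
      tauto
    have hcsd : (Bs \ E).card + (Bs ∩ E).card = Bs.card := Finset.card_sdiff_add_card_inter Bs E
    have hBE : (Bs ∩ E).card = i2 := by
      rw [hi2]
      congr 1
      ext j
      simp only [Finset.mem_inter, Finset.mem_filter, hBs, Finset.mem_univ, true_and]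
      tauto
    omega
  · -- c ∉ {1, 2}
    have hl : (Finset.univ.filter (fun j : Fin (a + b) =>
        ((if (j : ℕ) < a then 2 else 1) - (if j ∈ E then 1 else 0)) = c)) = ∅ := by
      rw [Finset.filter_eq_empty_iff]
      intro j _
      rw [hm j]
      by_cases hja : (j : ℕ) < a <;> by_cases hjE : j ∈ E <;> simp [hja, hjE] <;> omega
    have hrr : ((Finset.univ : Finset (Fin ((a - i1) + (b - i2 + i1)))).filter
        (fun (j : Fin ((a - i1) + (b - i2 + i1))) => (if (j : ℕ) < (a - i1) then 2 else 1) = c)) = ∅ := by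
      rw [Finset.filter_eq_empty_iff]
      intro j _
      split_ifs <;> omega
    rw [hl, hrr]
    rfl
end Sym

section Claim2

open Classical in
lemma fiber_card {r : ℕ} (hr : 2 ≤ r) (a b k : ℕ)
    (E : Finset (Fin (a + b))) (hE : E ∈ Finset.powersetCard k Finset.univ) :
    ((contW (a + b) (fun i => if (i : ℕ) < a then 2 else 1)).filter
      (fun w => (k ≤ w.length ∧ (w.take k).Chain' (· < ·) ∧ AvoidsInc r (w.drop k))
        ∧ (w.take k).toFinset = E)).card
    = Fc r (a + b) (fun j => (if (j : ℕ) < a then 2 else 1) - (if j ∈ E then 1 else 0)) := by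
  classical
  have hEk : E.card = k := (Finset.mem_powersetCard.1 hE).2
  set sE := E.sort (· ≤ ·) with hsE
  have hlenE : sE.length = k := by rw [hsE, Finset.length_sort]; exact hEk
  have hsorted : sE.Pairwise (· < ·) := List.sortedLT_iff_pairwise.1 (Finset.sortedLT_sort E)
  have hchain : sE.Chain' (· < ·) := hsorted.isChain
  have hnodupE : sE.Nodup := hsorted.nodup
  have htofinE : sE.toFinset = E := Finset.sort_toFinset _ _
  have hcountE : ∀ j, sE.count j = if j ∈ E then 1 else 0 := by
    intro j
    by_cases hj : j ∈ E
    · rw [if_pos hj]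
      exact List.count_eq_one_of_mem hnodupE (by rw [hsE, Finset.mem_sort]; exact hj)
    · rw [if_neg hj, List.count_eq_zero]
      intro hmem
      exact hj (by rw [← htofinE]; exact List.mem_toFinset.2 hmem)
  have htake : ∀ w, w ∈ ((contW (a + b) (fun i => if (i : ℕ) < a then 2 else 1)).filter
      (fun w => (k ≤ w.length ∧ (w.take k).Chain' (· < ·) ∧ AvoidsInc r (w.drop k))
        ∧ (w.take k).toFinset = E)) → w.take k = sE := by
    intro w hw
    rw [Finset.mem_filter] at hw
    obtain ⟨hwm, ⟨hkl, hch, -⟩, hfin⟩ := hw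
    have hsort2 : (w.take k).Pairwise (· < ·) := hch.pairwise
    have hnodup2 : (w.take k).Nodup := hsort2.nodup
    have hperm : (w.take k).Perm sE :=
      List.perm_of_nodup_nodup_toFinset_eq hnodup2 hnodupE (by rw [hfin, htofinE])
    exact List.Perm.eq_of_pairwise' (r := (· ≤ ·))
      (hsort2.imp le_of_lt) (hsorted.imp le_of_lt) hperm
  rw [Fc]
  apply Finset.card_nbij' (i := fun w => w.drop k) (j := fun v => sE ++ v)
  · intro w hw
    have htk := htake w hw
    rw [Finset.mem_coe, Finset.mem_filter] at hw ⊢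
    dsimp only
    obtain ⟨hwm, ⟨hkl, hch, hav⟩, hfin⟩ := hw
    constructor
    · rw [mem_contW]
      intro j
      have hcw : w.count j = (w.take k).count j + (w.drop k).count j := by
        conv_lhs => rw [← List.take_append_drop k w]
        rw [List.count_append]
      have hc0 := mem_contW.1 hwm j
      rw [htk, hcountE j] at hcw
      rw [hc0] at hcw
      split_ifs at hcw ⊢ <;> omega
    · exact hav
  · intro v hv
    rw [Finset.mem_coe, Finset.mem_filter] at hv ⊢
    obtain ⟨hvm, hva⟩ := hv
    have hlenw : (sE ++ v).take k = sE := List.take_left' hlenE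
    have hdrw : (sE ++ v).drop k = v := List.drop_left' hlenE
    refine ⟨?_, ⟨?_, ?_, ?_⟩, ?_⟩
    · rw [mem_contW]
      intro j
      rw [List.count_append, hcountE j, mem_contW.1 hvm j]
      split_ifs with h1 h2 h2 <;> omega
    · rw [List.length_append, hlenE]
      omega
    · rw [hlenw]
      exact hchain
    · rw [hdrw]
      exact hva
    · rw [hlenw, htofinE]
  · intro w hw
    have htk := htake w hw
    conv_rhs => rw [← List.take_append_drop k w]
    rw [htk]
  · intro v hv
    exact List.drop_left' hlenE

open Classical in
lemma count_subsets (a b k i : ℕ) (hik : i ≤ k) :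
    (((Finset.powersetCard k (Finset.univ : Finset (Fin (a + b)))).filter
      (fun E => (E.filter (fun (j : Fin (a + b)) => (j : ℕ) < a)).card = i)).card)
    = a.choose i * b.choose (k - i) := by
  classical
  set A := (Finset.univ : Finset (Fin (a + b))).filter (fun (j : Fin (a + b)) => (j : ℕ) < a) with hA
  set Bs := (Finset.univ : Finset (Fin (a + b))).filter (fun (j : Fin (a + b)) => ¬ (j : ℕ) < a) with hBs
  have hAcard : A.card = a := card_fin_lt (Nat.le_add_right a b)
  have hBcard : Bs.card = b := by
    have ht := Finset.card_filter_add_card_filter_not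
      (s := (Finset.univ : Finset (Fin (a + b)))) (p := fun (j : Fin (a + b)) => (j : ℕ) < a)
    have h3 : (Finset.univ : Finset (Fin (a + b))).card = a + b := by
      rw [Finset.card_univ, Fintype.card_fin]
    have h4 : A.card + Bs.card = a + b := by
      rw [hA, hBs]
      omega
    omega
  have hgoal : (((Finset.powersetCard k (Finset.univ : Finset (Fin (a + b)))).filter
      (fun E => (E.filter (fun (j : Fin (a + b)) => (j : ℕ) < a)).card = i)).card)
      = ((Finset.powersetCard i A) ×ˢ (Finset.powersetCard (k - i) Bs)).card := by
    apply Finset.card_nbij'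
      (i := fun E => (E.filter (fun (j : Fin (a + b)) => (j : ℕ) < a),
        E.filter (fun (j : Fin (a + b)) => ¬ (j : ℕ) < a)))
      (j := fun P => P.1 ∪ P.2)
    · intro E hE
      dsimp only
      rw [Finset.mem_coe, Finset.mem_filter, Finset.mem_powersetCard] at hE
      obtain ⟨⟨-, hEc⟩, hEi⟩ := hE
      rw [Finset.mem_coe, Finset.mem_product, Finset.mem_powersetCard, Finset.mem_powersetCard]
      have hsplit := Finset.card_filter_add_card_filter_not
        (s := E) (p := fun (j : Fin (a + b)) => (j : ℕ) < a)
      refine ⟨⟨?_, hEi⟩, ?_, ?_⟩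
      · intro x hx
        rw [Finset.mem_filter] at hx
        rw [hA, Finset.mem_filter]
        exact ⟨Finset.mem_univ _, hx.2⟩
      · intro x hx
        rw [Finset.mem_filter] at hx
        rw [hBs, Finset.mem_filter]
        exact ⟨Finset.mem_univ _, hx.2⟩
      · show (E.filter (fun (j : Fin (a + b)) => ¬ (j : ℕ) < a)).card = k - i
        omega
    · rintro ⟨P, Q⟩ hPQ
      rw [Finset.mem_coe, Finset.mem_product, Finset.mem_powersetCard, Finset.mem_powersetCard] at hPQ
      obtain ⟨⟨hPA, hPc⟩, hQB, hQc⟩ := hPQ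
      rw [Finset.mem_coe, Finset.mem_filter, Finset.mem_powersetCard]
      have hPa : ∀ x ∈ P, (x : ℕ) < a := by
        intro x hx
        have := hPA hx
        rw [hA, Finset.mem_filter] at this
        exact this.2
      have hQa : ∀ x ∈ Q, ¬ (x : ℕ) < a := by
        intro x hx
        have := hQB hx
        rw [hBs, Finset.mem_filter] at this
        exact this.2
      have hdisj : Disjoint P Q := by
        rw [Finset.disjoint_left]
        intro x hx hy
        exact hQa x hy (hPa x hx)
      have hfilt : (P ∪ Q).filter (fun (j : Fin (a + b)) => (j : ℕ) < a) = P := by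
        ext x
        rw [Finset.mem_filter, Finset.mem_union]
        constructor
        · rintro ⟨hx | hx, h2⟩
          · exact hx
          · exact absurd h2 (hQa x hx)
        · intro hx
          exact ⟨Or.inl hx, hPa x hx⟩
      refine ⟨⟨Finset.subset_univ _, ?_⟩, by rw [hfilt, hPc]⟩
      rw [Finset.card_union_of_disjoint hdisj, hPc, hQc]
      omega
    · intro E hE
      rw [Finset.mem_coe, Finset.mem_filter] at hE
      exact Finset.filter_union_filter_not_eq _ E
    · rintro ⟨P, Q⟩ hPQ
      rw [Finset.mem_coe, Finset.mem_product, Finset.mem_powersetCard, Finset.mem_powersetCard] at hPQ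
      obtain ⟨⟨hPA, hPc⟩, hQB, hQc⟩ := hPQ
      have hPa : ∀ x ∈ P, (x : ℕ) < a := by
        intro x hx
        have := hPA hx
        rw [hA, Finset.mem_filter] at this
        exact this.2
      have hQa : ∀ x ∈ Q, ¬ (x : ℕ) < a := by
        intro x hx
        have := hQB hx
        rw [hBs, Finset.mem_filter] at this
        exact this.2
      have h1 : (P ∪ Q).filter (fun (j : Fin (a + b)) => (j : ℕ) < a) = P := by
        ext x
        rw [Finset.mem_filter, Finset.mem_union]
        constructor
        · rintro ⟨hx | hx, h2⟩
          · exact hx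
          · exact absurd h2 (hQa x hx)
        · intro hx
          exact ⟨Or.inl hx, hPa x hx⟩
      have h2 : (P ∪ Q).filter (fun (j : Fin (a + b)) => ¬ (j : ℕ) < a) = Q := by
        ext x
        rw [Finset.mem_filter, Finset.mem_union]
        constructor
        · rintro ⟨hx | hx, h2⟩
          · exact absurd (hPa x hx) (fun h => h2 h)
          · exact hx
        · intro hx
          exact ⟨Or.inr hx, hQa x hx⟩
      rw [Prod.mk.injEq]
      exact ⟨h1, h2⟩
  rw [hgoal, Finset.card_product, Finset.card_powersetCard, Finset.card_powersetCard,
    hAcard, hBcard]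

open Classical in
lemma claim2 {r : ℕ} (hr : 2 ≤ r) (a b k : ℕ) (hk : 1 ≤ k) :
    (∑ w ∈ contW (a + b) (fun i => if (i : ℕ) < a then 2 else 1), chi r k w)
      = ∑ i ∈ Finset.range (k + 1),
          (a.choose i : ℤ) * (b.choose (k - i)) * B r (a - i) (b - (k - i) + i) := by
  classical
  have hchi : (∑ w ∈ contW (a + b) (fun i => if (i : ℕ) < a then 2 else 1), chi r k w)
      = (((contW (a + b) (fun i => if (i : ℕ) < a then 2 else 1)).filter
          (fun w => k ≤ w.length ∧ (w.take k).Chain' (· < ·) ∧ AvoidsInc r (w.drop k))).card : ℤ) := by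
    rw [Finset.card_filter, Nat.cast_sum]
    apply Finset.sum_congr rfl
    intro w hw
    rw [chi, apply_ite (Nat.cast : ℕ → ℤ)]
    norm_num
  rw [hchi]
  rcases lt_or_ge (a + b) k with hkN | hkN
  · -- k > a + b : both sides zero
    have hempty : ((contW (a + b) (fun i => if (i : ℕ) < a then 2 else 1)).filter
        (fun w => k ≤ w.length ∧ (w.take k).Chain' (· < ·) ∧ AvoidsInc r (w.drop k))) = ∅ := by
      rw [Finset.filter_eq_empty_iff]
      intro w hw
      rintro ⟨hkl, hch, -⟩
      have hsort2 : (w.take k).Pairwise (· < ·) := hch.pairwise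
      have hnodup2 : (w.take k).Nodup := hsort2.nodup
      have hlen2 : (w.take k).length = k := by
        rw [List.length_take]
        omega
      have hcard : (w.take k).toFinset.card = k := by
        rw [List.toFinset_card_of_nodup hnodup2, hlen2]
      have hle := Finset.card_le_card (Finset.subset_univ (w.take k).toFinset)
      rw [hcard, Finset.card_univ, Fintype.card_fin] at hle
      omega
    rw [hempty]
    rw [Finset.card_empty, Nat.cast_zero]
    symm
    apply Finset.sum_eq_zero
    intro i hi
    rcases le_or_gt i a with hia | hia
    · have : b < k - i := by omega
      rw [Nat.choose_eq_zero_of_lt this]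
      push_cast
      ring
    · rw [Nat.choose_eq_zero_of_lt hia]
      push_cast
      ring
  · -- main case
    rw [Finset.card_eq_sum_card_fiberwise (f := fun w => (w.take k).toFinset)
      (t := Finset.powersetCard k Finset.univ) (fun w hw => by
        rw [Finset.mem_coe, Finset.mem_filter] at hw
        obtain ⟨-, hkl, hch, -⟩ := hw
        rw [Finset.mem_coe, Finset.mem_powersetCard]
        refine ⟨Finset.subset_univ _, ?_⟩
        have hsort2 : (w.take k).Pairwise (· < ·) := hch.pairwise
        rw [List.toFinset_card_of_nodup hsort2.nodup, List.length_take]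
        omega)]
    have hfib : ∀ E ∈ Finset.powersetCard k (Finset.univ : Finset (Fin (a + b))),
        ((((contW (a + b) (fun i => if (i : ℕ) < a then 2 else 1)).filter
          (fun w => k ≤ w.length ∧ (w.take k).Chain' (· < ·) ∧ AvoidsInc r (w.drop k))).filter
            (fun w => (w.take k).toFinset = E)).card : ℤ)
        = (B r (a - (E.filter (fun (j : Fin (a + b)) => (j : ℕ) < a)).card)
            (b - (k - (E.filter (fun (j : Fin (a + b)) => (j : ℕ) < a)).card)
              + (E.filter (fun (j : Fin (a + b)) => (j : ℕ) < a)).card) : ℤ) := by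
      intro E hE
      rw [Finset.filter_filter]
      have h1 := fiber_card hr a b k E hE
      have h2 := Fc_reduced (r := r) (by omega) a b E
      have hEk : E.card = k := (Finset.mem_powersetCard.1 hE).2
      have hsplit := Finset.card_filter_add_card_filter_not
        (s := E) (p := fun (j : Fin (a + b)) => (j : ℕ) < a)
      have hi2 : (E.filter (fun (j : Fin (a + b)) => ¬ (j : ℕ) < a)).card
          = k - (E.filter (fun (j : Fin (a + b)) => (j : ℕ) < a)).card := by omega
      rw [h1, h2, hi2]
    rw [Nat.cast_sum, Finset.sum_congr rfl hfib]
    -- now classify by i1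
    rw [← Finset.sum_fiberwise_of_maps_to (g := fun E =>
        (E.filter (fun (j : Fin (a + b)) => (j : ℕ) < a)).card)
      (t := Finset.range (k + 1)) (fun E hE => by
        show (E.filter (fun (j : Fin (a + b)) => (j : ℕ) < a)).card ∈ Finset.range (k + 1)
        rw [Finset.mem_range]
        have hEk : E.card = k := (Finset.mem_powersetCard.1 hE).2
        have := Finset.card_filter_le E (fun (j : Fin (a + b)) => (j : ℕ) < a)
        omega)]
    apply Finset.sum_congr rfl
    intro i hi
    rw [Finset.mem_range] at hi
    have hconst : ∀ E ∈ (Finset.powersetCard k (Finset.univ : Finset (Fin (a + b)))).filter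
        (fun E => (E.filter (fun (j : Fin (a + b)) => (j : ℕ) < a)).card = i),
        (B r (a - (E.filter (fun (j : Fin (a + b)) => (j : ℕ) < a)).card)
            (b - (k - (E.filter (fun (j : Fin (a + b)) => (j : ℕ) < a)).card)
              + (E.filter (fun (j : Fin (a + b)) => (j : ℕ) < a)).card) : ℤ)
          = (B r (a - i) (b - (k - i) + i) : ℤ) := by
      intro E hE
      rw [Finset.mem_filter] at hE
      rw [hE.2]
    rw [Finset.sum_congr rfl hconst, Finset.sum_const, count_subsets a b k i (by omega)]
    rw [nsmul_eq_mul]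
    push_cast
    ring
end Claim2

section Final

lemma B00 {r : ℕ} (hr : 2 ≤ r) : B r 0 0 = 1 := by
  classical
  rw [B_eq_Fc, Fc]
  have hb1 : contW (0 + 0) (fun i => if (i : ℕ) < 0 then 2 else 1) = {[]} := by
    ext w
    rw [mem_contW, Finset.mem_singleton]
    constructor
    · intro hw
      cases w with
      | nil => rfl
      | cons a t => exact absurd a.2 (by omega)
    · rintro rfl
      intro j
      exact absurd j.2 (by omega)
  rw [hb1, Finset.filter_singleton, if_pos (avoidsInc_nil (by omega : 1 ≤ r))]
  rfl

theorem B_recurrence' (r : ℕ) (hr : 2 ≤ r) :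
    B r 0 0 = 1 ∧
    ∀ a b : ℕ, 1 ≤ a + b →
      (B r a b : ℤ) =
        a * B r (a - 1) (b + 1) + b * B r a (b - 1) +
        ∑ j ∈ Finset.Icc 1 (a + b),
          (-(∑ i ∈ Finset.range (j * r + 1),
              (a.choose i : ℤ) * (b.choose (j * r - i)) *
                B r (a - i) (b - (j * r - i) + i)) +
            ∑ i ∈ Finset.range (j * r + 2),
              (a.choose i : ℤ) * (b.choose (j * r + 1 - i)) *
                B r (a - i) (b - (j * r + 1 - i) + i)) := by
  classical
  refine ⟨B00 hr, ?_⟩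
  intro a b hab
  have hLlen : ∀ w ∈ contW (a + b) (fun i => if (i : ℕ) < a then 2 else 1),
      1 ≤ w.length ∧ w.length ≤ r * (a + b) := by
    intro w hw
    have hlen := length_of_mem_contW hw
    have hlow : a + b ≤ ∑ j : Fin (a + b), (if ((j : Fin (a+b)) : ℕ) < a then 2 else 1) := by
      have h1 : ∀ j : Fin (a + b), 1 ≤ (if (j : ℕ) < a then 2 else 1) := by
        intro j
        split_ifs <;> omega
      calc a + b = ∑ _j : Fin (a + b), 1 := by
            rw [Finset.sum_const, Finset.card_univ, Fintype.card_fin, smul_eq_mul, mul_one]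
        _ ≤ _ := Finset.sum_le_sum (fun j _ => h1 j)
    have hhigh : ∑ j : Fin (a + b), (if ((j : Fin (a+b)) : ℕ) < a then 2 else 1) ≤ r * (a + b) := by
      have h1 : ∀ j : Fin (a + b), (if (j : ℕ) < a then 2 else 1) ≤ r := by
        intro j
        split_ifs <;> omega
      calc ∑ j : Fin (a + b), (if ((j : Fin (a+b)) : ℕ) < a then 2 else 1)
          ≤ ∑ _j : Fin (a + b), r := Finset.sum_le_sum (fun j _ => h1 j)
        _ = r * (a + b) := by
            rw [Finset.sum_const, Finset.card_univ, Fintype.card_fin, smul_eq_mul, mul_comm]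
    constructor <;> omega
  have h0 : (B r a b : ℤ) = ∑ w ∈ contW (a + b) (fun i => if (i : ℕ) < a then 2 else 1),
      (if AvoidsInc r w then (1 : ℤ) else 0) := by
    rw [B_eq_Fc, Fc, Finset.card_filter, Nat.cast_sum]
    apply Finset.sum_congr rfl
    intro w hw
    rw [apply_ite (Nat.cast : ℕ → ℤ)]
    norm_num
  rw [h0]
  have h1 : ∀ w ∈ contW (a + b) (fun i => if (i : ℕ) < a then 2 else 1),
      (if AvoidsInc r w then (1 : ℤ) else 0)
        = chi r 1 w + ∑ j ∈ Finset.Icc 1 (a + b),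
            (-(chi r (j * r) w) + chi r (j * r + 1) w) := by
    intro w hw
    exact claim1 hr (a + b) (hLlen w hw).1 (hLlen w hw).2
  rw [Finset.sum_congr rfl h1, Finset.sum_add_distrib]
  have h2 : (∑ w ∈ contW (a + b) (fun i => if (i : ℕ) < a then 2 else 1),
      ∑ j ∈ Finset.Icc 1 (a + b), (-(chi r (j * r) w) + chi r (j * r + 1) w))
      = ∑ j ∈ Finset.Icc 1 (a + b),
          (-(∑ i ∈ Finset.range (j * r + 1),
              (a.choose i : ℤ) * (b.choose (j * r - i)) *
                B r (a - i) (b - (j * r - i) + i)) +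
            ∑ i ∈ Finset.range (j * r + 2),
              (a.choose i : ℤ) * (b.choose (j * r + 1 - i)) *
                B r (a - i) (b - (j * r + 1 - i) + i)) := by
    rw [Finset.sum_comm]
    apply Finset.sum_congr rfl
    intro j hj
    rw [Finset.mem_Icc] at hj
    rw [Finset.sum_add_distrib, Finset.sum_neg_distrib]
    rw [claim2 hr a b (j * r) (by nlinarith [hj.1]),
      claim2 hr a b (j * r + 1) (by omega)]
  rw [h2]
  have h3 : (∑ w ∈ contW (a + b) (fun i => if (i : ℕ) < a then 2 else 1), chi r 1 w)
      = a * B r (a - 1) (b + 1) + b * B r a (b - 1) := by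
    rw [claim2 hr a b 1 le_rfl]
    rw [Finset.sum_range_succ, Finset.sum_range_succ, Finset.sum_range_zero]
    simp only [Nat.choose_zero_right, Nat.choose_one_right, Nat.choose_self,
      Nat.sub_zero, Nat.sub_self, Nat.cast_one, add_zero, zero_add]
    ring_nf
  rw [h3]
end Final

/-- The quadratic-time recurrence for `B_r(α,β)`; terms whose arguments would be
negative are killed by vanishing binomial coefficients. -/
theorem B_recurrence (r : ℕ) (hr : 2 ≤ r) :
    B r 0 0 = 1 ∧
    ∀ a b : ℕ, 1 ≤ a + b →
      (B r a b : ℤ) =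
        a * B r (a - 1) (b + 1) + b * B r a (b - 1) +
        ∑ j ∈ Finset.Icc 1 (a + b),
          (-(∑ i ∈ Finset.range (j * r + 1),
              (a.choose i : ℤ) * (b.choose (j * r - i)) *
                B r (a - i) (b - (j * r - i) + i)) +
            ∑ i ∈ Finset.range (j * r + 2),
              (a.choose i : ℤ) * (b.choose (j * r + 1 - i)) *
                B r (a - i) (b - (j * r + 1 - i) + i)) := by
  exact B_recurrence' r hr
end

section
/- Let C be the set of clusters for the forbidden set B = {strictly increasing words of length r in alphabet {1,...,n}}, where a cluster is a word with a set of marked factors from B such that consecutive marks overlap and every letter lies in some mark, weighted by (-1)^{number of marks} times the product of variables of its letters. Then the total weight of all clusters equals Σ_{m≥1} (-e_{mr} + e_{mr+1}), where e_k is the k-th elementary symmetric polynomial in x_1,...,x_n. -/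
/-- A cluster for the forbidden set of strictly increasing length-`r` words over
the alphabet `Fin n`: a word together with a nonempty sorted list of marks
(start positions of occurrences of strictly increasing length-`r` factors) such
that consecutive marks overlap and every position is covered by some mark. -/
structure Cluster (n r : ℕ) where
  word : List (Fin n)
  marks : List ℕ
  marks_ne : marks ≠ []
  sorted : marks.Chain' (· < ·)
  occ : ∀ s ∈ marks, s + r ≤ word.length ∧ ((word.drop s).take r).Chain' (· < ·)
  overlap : marks.Chain' (fun s t => t < s + r)
  cover : ∀ i < word.length, ∃ s ∈ marks, s ≤ i ∧ i < s + r

/-- The weight of a cluster: `(-1)^{number of marks}` times the product of the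
variables of its letters. -/
noncomputable def clusterWeight {n r : ℕ} (c : Cluster n r) : MvPolynomial (Fin n) ℤ :=
  MvPolynomial.C ((-1 : ℤ) ^ c.marks.length) *
    (c.word.map fun a => (MvPolynomial.X a : MvPolynomial (Fin n) ℤ)).prod

theorem Cluster.ext' {n r : ℕ} {c₁ c₂ : Cluster n r} (hw : c₁.word = c₂.word)
    (hm : c₁.marks = c₂.marks) : c₁ = c₂ := by
  cases c₁; cases c₂
  simp only at hw hm
  subst hw; subst hm
  rfl


namespace ClusterAux

def gapLists (r : ℕ) : ℕ → Finset (List ℕ)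
  | 0 => {[]}
  | (d+1) =>
      (Finset.Icc 1 (min (d+1) (r-1))).attach.biUnion
        (fun g => (gapLists r (d+1-g.1)).image (fun l => g.1 :: l))
  decreasing_by
    have := (Finset.mem_Icc.mp g.2).1
    omega

theorem mem_gapLists {r : ℕ} (hr : 2 ≤ r) :
    ∀ d (l : List ℕ), l ∈ gapLists r d ↔ (∀ g ∈ l, 1 ≤ g ∧ g ≤ r - 1) ∧ l.sum = d := by
  intro d
  induction d using Nat.strong_induction_on with
  | _ d ih =>
    match d with
    | 0 =>
      intro l
      simp only [gapLists, Finset.mem_singleton]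
      constructor
      · rintro rfl; simp
      · rintro ⟨h1, h2⟩
        cases l with
        | nil => rfl
        | cons a t =>
          exfalso
          have := h1 a (by simp)
          simp only [List.sum_cons] at h2
          omega
    | (d+1) =>
      intro l
      rw [gapLists]
      simp only [Finset.mem_biUnion, Finset.mem_attach, Finset.mem_image, true_and]
      constructor
      · rintro ⟨⟨g, hg⟩, t, ht, rfl⟩
        have hg' := Finset.mem_Icc.mp hg
        rw [ih (d+1-g) (by omega)] at ht
        refine ⟨?_, ?_⟩
        · intro x hx
          rcases List.mem_cons.mp hx with rfl | hx
          · omega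
          · exact ht.1 x hx
        · simp only [List.sum_cons, ht.2]; omega
      · rintro ⟨h1, h2⟩
        cases l with
        | nil => simp at h2
        | cons g t =>
          have hg := h1 g (by simp)
          have hts : t.sum = d + 1 - g := by simp only [List.sum_cons] at h2; omega
          have hgle : g ≤ d + 1 := by simp only [List.sum_cons] at h2; omega
          refine ⟨⟨g, Finset.mem_Icc.mpr ⟨hg.1, by omega⟩⟩, t, ?_, rfl⟩
          rw [ih (d+1-g) (by omega)]
          exact ⟨fun x hx => h1 x (List.mem_cons_of_mem _ hx), hts⟩


def tval (r d : ℕ) : ℤ := if d % r = 0 then 1 else if d % r = 1 then -1 else 0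

def tsum (r d : ℕ) : ℤ := ∑ j ∈ Finset.range (d+1), tval r j

theorem tsum_eq {r : ℕ} (hr : 2 ≤ r) (d : ℕ) : tsum r d = if d % r = 0 then 1 else 0 := by
  induction d with
  | zero => simp [tsum, tval]
  | succ d ih =>
    have hstep : tsum r (d+1) = tsum r d + tval r (d+1) := Finset.sum_range_succ _ _
    rw [hstep, ih]
    have hm : d % r < r := Nat.mod_lt _ (by omega)
    have h1 : (d+1) % r = (d % r + 1) % r := by
      conv_lhs => rw [show d + 1 = d % r + 1 + r * (d / r) by
        have := Nat.div_add_mod d r; omega]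
      rw [Nat.add_mul_mod_self_left]
    rcases eq_or_lt_of_le (show d % r + 1 ≤ r by omega) with h | h
    · have h2 : (d+1) % r = 0 := by rw [h1, h]; exact Nat.mod_self r
      have h3 : d % r ≠ 0 := by omega
      simp only [tval, h2, if_pos rfl, if_neg h3]
      norm_num
    · have h2 : (d+1) % r = d % r + 1 := by rw [h1, Nat.mod_eq_of_lt h]
      rcases Nat.eq_zero_or_pos (d % r) with h0 | h0
      · simp only [tval, h2, h0, if_pos rfl]
        norm_num
      · have e1 : d % r ≠ 0 := by omega
        have e2 : d % r + 1 ≠ 1 := by omega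
        have e3 : d % r + 1 ≠ 0 := by omega
        simp only [tval, h2, if_neg e1, if_neg e2, if_neg e3]
        norm_num

theorem sum_Icc_tval {r : ℕ} (hr : 2 ≤ r) {a m : ℕ} (ha1 : 1 ≤ a) (ham : a ≤ m)
    (hmod : m % r = (a-1) % r) : ∑ j ∈ Finset.Icc a m, tval r j = 0 := by
  have h1 : ∑ j ∈ Finset.Ico 0 a, tval r j + ∑ j ∈ Finset.Ico a (m+1), tval r j
      = ∑ j ∈ Finset.Ico 0 (m+1), tval r j :=
    Finset.sum_Ico_consecutive _ (by omega) (by omega)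
  have h2 : ∑ j ∈ Finset.Ico 0 (m+1), tval r j = tsum r m := by
    rw [Nat.Ico_zero_eq_range]; rfl
  have h3 : ∑ j ∈ Finset.Ico 0 a, tval r j = tsum r (a-1) := by
    rw [Nat.Ico_zero_eq_range, tsum, show a - 1 + 1 = a by omega]
  have h4 : ∑ j ∈ Finset.Ico a (m+1), tval r j = ∑ j ∈ Finset.Icc a m, tval r j := by
    rw [Finset.Ico_add_one_right_eq_Icc]
  rw [h2, h3, h4] at h1
  rw [tsum_eq hr, tsum_eq hr, hmod] at h1
  omega

theorem sum_Icc_tval₀ {r : ℕ} (hr : 2 ≤ r) {m : ℕ} (h1 : 1 ≤ m) (h2 : m % r ≠ 0) :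
    ∑ j ∈ Finset.Icc 0 m, tval r j = 0 := by
  have : ∑ j ∈ Finset.Icc 0 m, tval r j = tsum r m := by
    rw [← Finset.Ico_add_one_right_eq_Icc, Nat.Ico_zero_eq_range]; rfl
  rw [this, tsum_eq hr, if_neg h2]

theorem sum_gapLists {r : ℕ} (hr : 2 ≤ r) :
    ∀ d, (∑ l ∈ gapLists r d, ((-1:ℤ) ^ l.length)) = tval r d := by
  intro d
  induction d using Nat.strong_induction_on with
  | _ d ih =>
    match d with
    | 0 => simp [gapLists, tval]
    | (d+1) =>
      rw [gapLists]
      rw [Finset.sum_biUnion (by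
        intro g1 h1 g2 h2 hne
        simp only [Finset.disjoint_left]
        rintro l hl1 hl2
        simp only [Finset.mem_image] at hl1 hl2
        obtain ⟨t1, _, rfl⟩ := hl1
        obtain ⟨t2, _, ht⟩ := hl2
        apply hne
        exact Subtype.ext (by injection ht.symm) )]
      have step : ∀ g : {x // x ∈ Finset.Icc 1 (min (d+1) (r-1))},
          (∑ l ∈ (gapLists r (d+1-g.1)).image (fun l => g.1 :: l), ((-1:ℤ)^l.length))
            = -(tval r (d+1-g.1)) := by
        rintro ⟨g, hg⟩
        have hg' := Finset.mem_Icc.mp hg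
        rw [Finset.sum_image (fun a _ b _ h => by injection h)]
        have hterm : ∀ t ∈ gapLists r (d+1-g), ((-1:ℤ)^(g :: t).length) = -((-1:ℤ)^t.length) := by
          intro t _
          rw [List.length_cons, pow_succ]; ring
        rw [Finset.sum_congr rfl hterm, Finset.sum_neg_distrib, ih (d+1-g) (by omega)]
      rw [Finset.sum_congr rfl (fun g _ => step g), Finset.sum_attach _ (fun g => -(tval r (d+1-g))),
        Finset.sum_neg_distrib]
      have key : ∑ g ∈ Finset.Icc 1 (min (d+1) (r-1)), tval r (d+1-g) = -(tval r (d+1)) := by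
        set K := min (d+1) (r-1) with hK
        have hK1 : 1 ≤ K := by omega
        have hre : ∑ g ∈ Finset.Icc 1 K, tval r (d+1-g) = ∑ j ∈ Finset.Icc (d+1-K) d, tval r j := by
          refine Finset.sum_nbij' (fun g => d+1-g) (fun j => d+1-j) ?_ ?_ ?_ ?_ ?_
          · intro g hg; simp only [Finset.mem_Icc] at hg ⊢; omega
          · intro j hj; simp only [Finset.mem_Icc] at hj ⊢; omega
          · intro g hg; simp only [Finset.mem_Icc] at hg ⊢; omega
          · intro j hj; simp only [Finset.mem_Icc] at hj ⊢; omega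
          · intro g hg; rfl
        have hfull : ∑ j ∈ Finset.Icc (d+1-K) (d+1), tval r j = 0 := by
          rcases Nat.eq_zero_or_pos (d+1-K) with h0 | h0
          · rw [h0]
            refine sum_Icc_tval₀ hr (by omega) ?_
            have : d + 1 < r := by omega
            rw [Nat.mod_eq_of_lt this]; omega
          · refine sum_Icc_tval hr (by omega) (by omega) ?_
            have hKr : K = r - 1 := by omega
            have heq : d + 1 = (d + 1 - K - 1) + r := by omega
            conv_lhs => rw [heq]
            rw [Nat.add_mod_right]
        rw [Finset.sum_Icc_succ_top (by omega)] at hfull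
        rw [hre]
        omega
      rw [key, neg_neg]


theorem scanl_head : ∀ (l : List ℕ) (a : ℕ), ∃ t, List.scanl (· + ·) a l = a :: t
  | [], a => ⟨[], rfl⟩
  | (g :: l), a => ⟨List.scanl (· + ·) (a+g) l, by simp [List.scanl_cons]⟩

theorem scanl_ne_nil (l : List ℕ) (a : ℕ) : List.scanl (· + ·) a l ≠ [] := by
  obtain ⟨t, ht⟩ := scanl_head l a; simp [ht]

theorem chain'_scanl {r : ℕ} : ∀ (l : List ℕ) (a : ℕ), (∀ g ∈ l, 1 ≤ g ∧ g ≤ r - 1) →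
    (List.scanl (· + ·) a l).Chain' (fun s t => s < t ∧ t < s + r)
  | [], a, _ => by exact List.IsChain.singleton a
  | (g :: l), a, h => by
    rw [List.scanl_cons]
    obtain ⟨t, ht⟩ := scanl_head l (a+g)
    have hrec := chain'_scanl l (a+g) (fun x hx => h x (List.mem_cons_of_mem _ hx))
    rw [ht] at hrec
    have hg := h g List.mem_cons_self
    simp only [List.singleton_append, ht]
    simp only [List.Chain', List.isChain_cons_cons]
    exact ⟨⟨by omega, by omega⟩, hrec⟩

theorem mem_scanl_le : ∀ (l : List ℕ) (a s : ℕ), s ∈ List.scanl (· + ·) a l → s ≤ a + l.sum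
  | [], a, s, h => by simp at h; omega
  | (g :: l), a, s, h => by
    rw [List.scanl_cons, List.mem_cons] at h
    rcases h with rfl | h
    · omega
    · have := mem_scanl_le l (a+g) s h
      simp only [List.sum_cons]; omega

theorem getLast_scanl : ∀ (l : List ℕ) (a : ℕ) (h : List.scanl (· + ·) a l ≠ []),
    (List.scanl (· + ·) a l).getLast h = a + l.sum
  | [], a, h => by simp
  | (g :: l), a, h => by
    have e : (List.scanl (· + ·) a (g :: l)).getLast h
        = (List.scanl (· + ·) (a+g) l).getLast (scanl_ne_nil l (a+g)) := by
      simp only [List.scanl_cons]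
      exact List.getLast_cons _
    rw [e, getLast_scanl l (a+g) (scanl_ne_nil l (a+g))]
    simp only [List.sum_cons]; omega

theorem head_scanl (l : List ℕ) (a : ℕ) (h : List.scanl (· + ·) a l ≠ []) :
    (List.scanl (· + ·) a l).head h = a := by
  obtain ⟨t, ht⟩ := scanl_head l a
  simp [ht]

theorem scanl_injective : ∀ (l1 l2 : List ℕ) (a : ℕ),
    List.scanl (· + ·) a l1 = List.scanl (· + ·) a l2 → l1 = l2
  | [], [], a, _ => rfl
  | [], (g::t), a, h => by
    have := congrArg List.length h; simp [List.length_scanl] at this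
  | (g::t), [], a, h => by
    have := congrArg List.length h; simp [List.length_scanl] at this
  | (g1::t1), (g2::t2), a, h => by
    rw [List.scanl_cons, List.scanl_cons] at h
    have h' : List.scanl (· + ·) (a+g1) t1 = List.scanl (· + ·) (a+g2) t2 := by injection h
    have hg : g1 = g2 := by
      obtain ⟨u1, hu1⟩ := scanl_head t1 (a+g1)
      obtain ⟨u2, hu2⟩ := scanl_head t2 (a+g2)
      rw [hu1, hu2] at h'
      have : a + g1 = a + g2 := by injection h'
      omega
    subst hg
    rw [scanl_injective t1 t2 (a+g1) h']

theorem cover_aux {r : ℕ} : ∀ (l : List ℕ) (hl : l ≠ []), List.Chain' (fun s t => t < s + r) l →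
    ∀ i, l.head hl ≤ i → i < l.getLast hl + r → ∃ s ∈ l, s ≤ i ∧ i < s + r
  | [a], _, _, i, h1, h2 => ⟨a, by simp, by simpa using h1, by simpa using h2⟩
  | (a :: b :: t), _, hc, i, h1, h2 => by
    simp only [List.Chain', List.isChain_cons_cons] at hc
    rcases Nat.lt_or_ge i b with h | h
    · refine ⟨a, by simp, by simpa using h1, ?_⟩
      have := hc.1; omega
    · obtain ⟨s, hs, hs1, hs2⟩ := cover_aux (b :: t) (by simp) hc.2 i (by simpa using h)
        (by rwa [List.getLast_cons (by simp)] at h2)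
      exact ⟨s, List.mem_cons_of_mem _ hs, hs1, hs2⟩

theorem straddle {Q : ℕ → ℕ → Prop} : ∀ (l : List ℕ) (a : ℕ), List.Chain Q a l → ∀ i, a ≤ i →
    ∀ b ∈ a :: l, i < b → ∃ u ∈ a :: l, ∃ v ∈ a :: l, u ≤ i ∧ i < v ∧ Q u v
  | [], a, _, i, hai, b, hb, hib => by simp at hb; omega
  | (c :: l), a, hc, i, hai, b, hb, hib => by
    rcases List.chain_cons.mp hc with ⟨hac, hc'⟩
    rcases Nat.lt_or_ge i c with h | h
    · exact ⟨a, by simp, c, by simp, hai, h, hac⟩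
    · have hb' : b ∈ c :: l := by
        rcases List.mem_cons.mp hb with rfl | hb'
        · omega
        · exact hb'
      obtain ⟨u, hu, v, hv, h1, h2, h3⟩ := straddle l c hc' i h b hb' hib
      exact ⟨u, List.mem_cons_of_mem _ hu, v, List.mem_cons_of_mem _ hv, h1, h2, h3⟩

theorem chain'_and {α : Type*} {R S : α → α → Prop} {l : List α} (h1 : l.Chain' R)
    (h2 : l.Chain' S) : l.Chain' (fun a b => R a b ∧ S a b) := by
  simp only [List.Chain', List.isChain_iff_getElem] at *
  exact fun i h => ⟨h1 i h, h2 i h⟩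

theorem le_getLast_of_chain' : ∀ (l : List ℕ) (h : l ≠ []), l.Chain' (· < ·) →
    ∀ x ∈ l, x ≤ l.getLast h
  | [a], _, _, x, hx => by simp at hx; simp [hx]
  | (a :: b :: t), _, hc, x, hx => by
    simp only [List.Chain', List.isChain_cons_cons] at hc
    rw [List.getLast_cons (by simp : (b :: t) ≠ [])]
    rcases List.mem_cons.mp hx with rfl | hx'
    · have hb := le_getLast_of_chain' (b :: t) (by simp) hc.2 b (by simp)
      omega
    · exact le_getLast_of_chain' (b :: t) (by simp) hc.2 x hx'

theorem marks_recon {r : ℕ} (hr : 2 ≤ r) : ∀ (l : List ℕ) (a : ℕ),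
    List.Chain (fun s t => s < t ∧ t < s + r) a l →
    List.scanl (· + ·) a (List.zipWith (fun x y => y - x) (a :: l) l) = a :: l ∧
    (∀ g ∈ List.zipWith (fun x y => y - x) (a :: l) l, 1 ≤ g ∧ g ≤ r - 1) ∧
    (List.zipWith (fun x y => y - x) (a :: l) l).sum = (a :: l).getLast (by simp) - a
  | [], a, _ => by simp
  | (b :: l), a, hc => by
    rcases List.chain_cons.mp hc with ⟨hab, hc'⟩
    obtain ⟨h1, h2, h3⟩ := marks_recon hr l b hc'
    have hz : List.zipWith (fun x y => y - x) (a :: b :: l) (b :: l)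
        = (b - a) :: List.zipWith (fun x y => y - x) (b :: l) l := by
      simp [List.zipWith_cons_cons]
    refine ⟨?_, ?_, ?_⟩
    · rw [hz, List.scanl_cons,
        show a + (b - a) = b by omega, h1]
    · intro g hg
      rw [hz] at hg
      rcases List.mem_cons.mp hg with rfl | hg'
      · omega
      · exact h2 g hg'
    · have hble : b ≤ (b :: l).getLast (by simp) :=
        le_getLast_of_chain' (b :: l) (by simp)
          (List.IsChain.imp (fun a b h => h.1) (show List.Chain' _ (b::l) from hc'.imp (fun _ _ h => h)))
          b (by simp)
      rw [hz, List.sum_cons, h3, List.getLast_cons (by simp : (b :: l) ≠ [])]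
      omega


def mkCluster {n r : ℕ} (hr : 2 ≤ r) (L : ℕ) (S : Finset (Fin n)) (gl : List ℕ)
    (hL : r ≤ L) (hS : S.card = L) (hgl : ∀ g ∈ gl, 1 ≤ g ∧ g ≤ r - 1)
    (hsum : gl.sum = L - r) : Cluster n r where
  word := S.sort (· ≤ ·)
  marks := List.scanl (· + ·) 0 gl
  marks_ne := scanl_ne_nil gl 0
  sorted := (chain'_scanl gl 0 hgl).imp (fun _ _ h => h.1)
  overlap := (chain'_scanl gl 0 hgl).imp (fun _ _ h => h.2)
  occ := by
    intro s hs
    have hlen : (S.sort (· ≤ ·)).length = L := by rw [Finset.length_sort, hS]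
    have h1 : s ≤ L - r := by
      have := mem_scanl_le gl 0 s hs
      omega
    refine ⟨by omega, ?_⟩
    have hp : (S.sort (· ≤ ·)).Pairwise (· < ·) := List.sortedLT_iff_pairwise.mp (Finset.sortedLT_sort S)
    exact (hp.sublist ((List.take_sublist _ _).trans (List.drop_sublist _ _))).isChain
  cover := by
    intro i hi
    rw [Finset.length_sort, hS] at hi
    refine cover_aux (List.scanl (· + ·) 0 gl) (scanl_ne_nil gl 0)
      ((chain'_scanl gl 0 hgl).imp (fun _ _ h => h.2)) i ?_ ?_
    · rw [head_scanl]; omega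
    · rw [getLast_scanl, hsum]; omega

theorem clusterWeight_mkCluster {n r : ℕ} (hr : 2 ≤ r) (L : ℕ) (S : Finset (Fin n)) (gl : List ℕ)
    (hL : r ≤ L) (hS : S.card = L) (hgl : ∀ g ∈ gl, 1 ≤ g ∧ g ≤ r - 1)
    (hsum : gl.sum = L - r) :
    clusterWeight (mkCluster hr L S gl hL hS hgl hsum)
      = MvPolynomial.C ((-1 : ℤ) ^ (gl.length + 1)) * ∏ i ∈ S, MvPolynomial.X i := by
  unfold clusterWeight mkCluster
  simp only
  rw [List.length_scanl]
  congr 1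
  rw [Finset.prod_eq_multiset_prod, ← Finset.sort_eq S (· ≤ ·), Multiset.map_coe, Multiset.prod_coe]

variable {n r : ℕ}

theorem cluster_L_ge (hr : 2 ≤ r) (c : Cluster n r) : r ≤ c.word.length := by
  obtain ⟨s, hs⟩ := List.exists_mem_of_ne_nil _ c.marks_ne
  have := (c.occ s hs).1; omega

theorem cluster_zero_mem (hr : 2 ≤ r) (c : Cluster n r) : 0 ∈ c.marks := by
  have hL := cluster_L_ge hr c
  obtain ⟨s, hs, h1, _⟩ := c.cover 0 (by omega)
  have hs0 : s = 0 := by omega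
  rwa [hs0] at hs

theorem cluster_marks_eq (hr : 2 ≤ r) (c : Cluster n r) : ∃ tl, c.marks = 0 :: tl := by
  obtain ⟨m0, tl, hm⟩ := List.exists_cons_of_ne_nil c.marks_ne
  have h0 := cluster_zero_mem hr c
  rw [hm] at h0
  have hp : (m0 :: tl).Pairwise (· < ·) := by
    have hc := c.sorted; rw [hm] at hc; exact List.isChain_iff_pairwise.mp hc
  rcases List.mem_cons.mp h0 with h | h
  · exact ⟨tl, by rw [hm, h]⟩
  · have := (List.pairwise_cons.mp hp).1 0 h; omega

theorem cluster_getLast (hr : 2 ≤ r) (c : Cluster n r) :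
    c.marks.getLast c.marks_ne = c.word.length - r := by
  have hL := cluster_L_ge hr c
  obtain ⟨s, hs, h1, h2⟩ := c.cover (c.word.length - 1) (by omega)
  have hsr := (c.occ s hs).1
  have hmax : ∀ x ∈ c.marks, x ≤ c.word.length - r := fun x hx => by
    have := (c.occ x hx).1; omega
  have h5 := le_getLast_of_chain' c.marks c.marks_ne c.sorted _ hs
  have h6 := hmax _ (List.getLast_mem c.marks_ne)
  omega

theorem cluster_word_pairwise (hr : 2 ≤ r) (c : Cluster n r) : c.word.Pairwise (· < ·) := by
  have hL := cluster_L_ge hr c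
  rw [← List.isChain_iff_pairwise, List.isChain_iff_getElem]
  intro i hi
  have hi1 : i + 1 < c.word.length := by omega
  -- find u ∈ marks with u ≤ i and i + 1 < u + r
  obtain ⟨u, hu, hu1, hu2⟩ : ∃ u ∈ c.marks, u ≤ i ∧ i + 1 < u + r := by
    obtain ⟨t, ht, ht1, ht2⟩ := c.cover (i+1) hi1
    rcases Nat.lt_or_ge i t with h | h
    · -- t = i + 1
      have htt : t = i + 1 := by omega
      obtain ⟨tl, hm⟩ := cluster_marks_eq hr c
      have hQ : List.Chain (fun s t => s < t ∧ t < s + r) 0 tl := by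
        have := chain'_and c.sorted c.overlap
        rw [hm] at this
        exact this
      obtain ⟨u, hu, v, hv, g1, g2, g3, g4⟩ :=
        straddle tl 0 hQ i (Nat.zero_le i) t (by rw [← hm]; exact ht) (by omega)
      refine ⟨u, by rw [hm]; exact hu, g1, ?_⟩
      omega
    · exact ⟨t, ht, h, ht2⟩
  have hocc := (c.occ u hu).2
  simp only [List.Chain', List.isChain_iff_getElem] at hocc
  have hwin : ((c.word.drop u).take r).length = r := by
    rw [List.length_take, List.length_drop]
    have := (c.occ u hu).1
    omega
  have hr2 : i - u < ((c.word.drop u).take r).length - 1 := by omega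
  have := hocc (i - u) (by omega)
  simp only [List.get_eq_getElem, List.getElem_take, List.getElem_drop] at this ⊢
  have e1 : u + (i - u) = i := by omega
  have e2 : u + (i - u + 1) = i + 1 := by omega
  simp only [e1, e2] at this
  exact this


theorem getLast_eq_of_eq {l1 l2 : List ℕ} (h : l1 = l2) (h1 : l1 ≠ []) (h2 : l2 ≠ []) :
    l1.getLast h1 = l2.getLast h2 := by subst h; rfl

def DSet (n r : ℕ) : Finset ((_ : ℕ) × Finset (Fin n) × List ℕ) :=
  (Finset.Icc r n).sigma fun L => (Finset.univ.powersetCard L) ×ˢ gapLists r (L - r)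

theorem mem_DSet (hr : 2 ≤ r) {p : (_ : ℕ) × Finset (Fin n) × List ℕ}
    (hp : p ∈ DSet n r) :
    r ≤ p.1 ∧ p.1 ≤ n ∧ p.2.1.card = p.1 ∧ (∀ g ∈ p.2.2, 1 ≤ g ∧ g ≤ r - 1) ∧
      p.2.2.sum = p.1 - r := by
  obtain ⟨L, S, gl⟩ := p
  rw [DSet, Finset.mem_sigma, Finset.mem_product, Finset.mem_Icc,
    Finset.mem_powersetCard_univ, mem_gapLists hr] at hp
  tauto

def phi (hr : 2 ≤ r) (p : {x // x ∈ DSet n r}) : Cluster n r :=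
  mkCluster hr p.1.1 p.1.2.1 p.1.2.2 (mem_DSet hr p.2).1 (mem_DSet hr p.2).2.2.1
    (mem_DSet hr p.2).2.2.2.1 (mem_DSet hr p.2).2.2.2.2

theorem phi_inj (hr : 2 ≤ r) : Function.Injective (phi (n := n) hr) := by
  rintro ⟨⟨L1, S1, gl1⟩, h1⟩ ⟨⟨L2, S2, gl2⟩, h2⟩ h
  have hw : S1.sort (· ≤ ·) = S2.sort (· ≤ ·) := congrArg Cluster.word h
  have hmk : List.scanl (· + ·) 0 gl1 = List.scanl (· + ·) 0 gl2 := congrArg Cluster.marks h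
  have hS : S1 = S2 := by
    have := congrArg (fun l => l.toFinset) hw
    simpa [Finset.sort_toFinset] using this
  have hgl : gl1 = gl2 := scanl_injective _ _ _ hmk
  have hL : L1 = L2 := by
    have e1 : S1.card = L1 := by simpa using (mem_DSet hr h1).2.2.1
    have e2 : S2.card = L2 := by simpa using (mem_DSet hr h2).2.2.1
    rw [← e1, ← e2, hS]
  subst hS; subst hgl; subst hL
  rfl

theorem phi_surj (hr : 2 ≤ r) : Function.Surjective (phi (n := n) hr) := by
  intro c
  have hL := cluster_L_ge hr c
  have hwp := cluster_word_pairwise hr c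
  have hnd : c.word.Nodup := hwp.imp (fun h => ne_of_lt h)
  obtain ⟨tl, hm⟩ := cluster_marks_eq hr c
  have hQ : List.Chain (fun s t => s < t ∧ t < s + r) 0 tl := by
    have := chain'_and c.sorted c.overlap
    rw [hm] at this
    exact this
  obtain ⟨hrecon, hglprop, hglsum⟩ := marks_recon hr tl 0 hQ
  have hlast : (0 :: tl).getLast (by simp) = c.word.length - r :=
    (getLast_eq_of_eq hm.symm (by simp) c.marks_ne).trans (cluster_getLast hr c)
  rw [hlast] at hglsum
  have hcard : c.word.toFinset.card = c.word.length := List.toFinset_card_of_nodup hnd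
  have hsort : c.word.toFinset.sort (· ≤ ·) = c.word :=
    (List.toFinset_sort (· ≤ ·) hnd).mpr (hwp.imp (fun h => le_of_lt h))
  have hmem : (⟨c.word.length, c.word.toFinset,
      List.zipWith (fun x y => y - x) (0 :: tl) tl⟩ :
      (_ : ℕ) × Finset (Fin n) × List ℕ) ∈ DSet n r := by
    rw [DSet, Finset.mem_sigma, Finset.mem_product, Finset.mem_Icc,
      Finset.mem_powersetCard_univ, mem_gapLists hr]
    dsimp only
    refine ⟨⟨hL, ?_⟩, hcard, hglprop, by omega⟩
    calc c.word.length = c.word.toFinset.card := hcard.symm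
      _ ≤ (Finset.univ : Finset (Fin n)).card := Finset.card_le_univ _
      _ = n := by simp
  refine ⟨⟨_, hmem⟩, Cluster.ext' ?_ ?_⟩
  · show c.word.toFinset.sort (· ≤ ·) = c.word
    exact hsort
  · show List.scanl (· + ·) 0 (List.zipWith (fun x y => y - x) (0 :: tl) tl) = c.marks
    rw [hrecon, hm]

theorem clusterWeight_phi (hr : 2 ≤ r) (p : {x // x ∈ DSet n r}) :
    clusterWeight (phi hr p)
      = MvPolynomial.C ((-1 : ℤ) ^ (p.1.2.2.length + 1)) * ∏ i ∈ p.1.2.1, MvPolynomial.X i :=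
  clusterWeight_mkCluster hr _ _ _ _ _ _ _

end ClusterAux

/-- The total weight of all clusters equals `∑_{m≥1} (-e_{mr} + e_{mr+1})`. -/
theorem cluster_weight_sum (n r : ℕ) (hr : 2 ≤ r) :
    ∑ᶠ c : Cluster n r, clusterWeight c =
      ∑ m ∈ Finset.Icc 1 n,
        (-(MvPolynomial.esymm (Fin n) ℤ (m * r)) +
          MvPolynomial.esymm (Fin n) ℤ (m * r + 1)) := by
  classical
  have h1 : ∑ᶠ c : Cluster n r, clusterWeight c
      = ∑ p ∈ ClusterAux.DSet n r,
          (MvPolynomial.C ((-1 : ℤ) ^ (p.2.2.length + 1)) * ∏ i ∈ p.2.1, MvPolynomial.X i) := by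
    have e1 : ∑ᶠ (p : {x // x ∈ ClusterAux.DSet n r}),
        (MvPolynomial.C ((-1 : ℤ) ^ (p.1.2.2.length + 1)) * ∏ i ∈ p.1.2.1, MvPolynomial.X i)
        = ∑ᶠ c : Cluster n r, clusterWeight c :=
      finsum_eq_of_bijective (ClusterAux.phi hr)
        ⟨ClusterAux.phi_inj hr, ClusterAux.phi_surj hr⟩
        (fun p => (ClusterAux.clusterWeight_phi hr p).symm)
    rw [← e1, finsum_eq_sum_of_fintype, ← Finset.sum_coe_sort (ClusterAux.DSet n r)]
  set f : ℕ → MvPolynomial (Fin n) ℤ :=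
    fun L => MvPolynomial.C (-(ClusterAux.tval r (L - r))) * MvPolynomial.esymm (Fin n) ℤ L
    with hf
  have h2 : ∑ p ∈ ClusterAux.DSet n r,
      (MvPolynomial.C ((-1 : ℤ) ^ (p.2.2.length + 1)) * ∏ i ∈ p.2.1, MvPolynomial.X i)
      = ∑ L ∈ Finset.Icc r n, f L := by
    rw [ClusterAux.DSet, Finset.sum_sigma]
    refine Finset.sum_congr rfl fun L hL => ?_
    rw [Finset.sum_product]
    dsimp only
    have inner : ∑ gl ∈ ClusterAux.gapLists r (L - r),
        MvPolynomial.C (σ := Fin n) ((-1 : ℤ) ^ (gl.length + 1))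
        = MvPolynomial.C (σ := Fin n) (-(ClusterAux.tval r (L - r))) := by
      rw [← map_sum]
      congr 1
      rw [Finset.sum_congr rfl (fun gl _ => by rw [pow_succ, mul_neg_one] :
        ∀ gl ∈ ClusterAux.gapLists r (L - r), ((-1:ℤ) ^ (gl.length + 1)) = -((-1:ℤ) ^ gl.length)),
        Finset.sum_neg_distrib, ClusterAux.sum_gapLists hr]
    calc ∑ S ∈ Finset.univ.powersetCard L, ∑ gl ∈ ClusterAux.gapLists r (L - r),
          (MvPolynomial.C ((-1 : ℤ) ^ (gl.length + 1)) * ∏ i ∈ S, MvPolynomial.X i)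
        = ∑ S ∈ Finset.univ.powersetCard L,
            (∑ gl ∈ ClusterAux.gapLists r (L - r),
              MvPolynomial.C (σ := Fin n) ((-1 : ℤ) ^ (gl.length + 1))) * ∏ i ∈ S, MvPolynomial.X i := by
          exact Finset.sum_congr rfl fun S _ => (Finset.sum_mul _ _ _).symm
      _ = ∑ S ∈ Finset.univ.powersetCard L,
            MvPolynomial.C (σ := Fin n) (-(ClusterAux.tval r (L - r))) * ∏ i ∈ S, MvPolynomial.X i :=
          Finset.sum_congr rfl fun S _ => by rw [inner]
      _ = MvPolynomial.C (-(ClusterAux.tval r (L - r)))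
            * ∑ S ∈ Finset.univ.powersetCard L, ∏ i ∈ S, MvPolynomial.X i :=
          (Finset.mul_sum _ _ _).symm
      _ = f L := rfl
  have hzero : ∀ k, n < k → MvPolynomial.esymm (Fin n) ℤ k = 0 := by
    intro k hk
    rw [MvPolynomial.esymm, Finset.powersetCard_eq_empty.mpr (by simpa using hk),
      Finset.sum_empty]
  have h4 : ∑ L ∈ Finset.Icc r n, f L = ∑ L ∈ Finset.Icc r (n * r + 1), f L := by
    apply Finset.sum_subset
    · apply Finset.Icc_subset_Icc_right
      have : n * 1 ≤ n * r := Nat.mul_le_mul_left n (by omega)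
      omega
    · intro L hL hnot
      simp only [Finset.mem_Icc] at hL hnot
      have hn : n < L := by omega
      rw [hf]
      simp only
      rw [hzero L hn, mul_zero]
  have h5 : ∑ L ∈ Finset.Icc r (n * r + 1), f L
      = ∑ m ∈ Finset.Icc 1 n, ∑ L ∈ ({m * r, m * r + 1} : Finset ℕ), f L := by
    have hdisj : (↑(Finset.Icc 1 n) : Set ℕ).PairwiseDisjoint
        (fun m => ({m * r, m * r + 1} : Finset ℕ)) := by
      intro a ha b hb hne
      simp only [Finset.disjoint_left, Finset.mem_insert, Finset.mem_singleton]
      rintro x (rfl | rfl) hx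
      · rcases hx with h | h
        · exact hne (Nat.eq_of_mul_eq_mul_right (by omega) h)
        · have e1 : (a * r) % r = 0 := Nat.mul_mod_left a r
          have e2 : (b * r + 1) % r = 1 := by
            rw [show b * r + 1 = 1 + b * r by omega, Nat.add_mul_mod_self_right]
            exact Nat.mod_eq_of_lt (by omega)
          rw [h] at e1; omega
      · rcases hx with h | h
        · have e1 : (b * r) % r = 0 := Nat.mul_mod_left b r
          have e2 : (a * r + 1) % r = 1 := by
            rw [show a * r + 1 = 1 + a * r by omega, Nat.add_mul_mod_self_right]
            exact Nat.mod_eq_of_lt (by omega)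
          rw [← h] at e1; omega
        · have : a * r = b * r := by omega
          exact hne (Nat.eq_of_mul_eq_mul_right (by omega) this)
    rw [← Finset.sum_biUnion hdisj]
    refine (Finset.sum_subset ?_ ?_).symm
    · intro x hx
      simp only [Finset.mem_biUnion, Finset.mem_Icc, Finset.mem_insert,
        Finset.mem_singleton] at hx
      obtain ⟨m, ⟨hm1, hm2⟩, hx⟩ := hx
      have l1 : r ≤ m * r := Nat.le_mul_of_pos_left r (by omega)
      have l2 : m * r ≤ n * r := Nat.mul_le_mul_right r hm2
      simp only [Finset.mem_Icc]
      rcases hx with rfl | rfl <;> omega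
    · intro L hL hnot
      simp only [Finset.mem_Icc] at hL
      have hvan0 : ClusterAux.tval r (L - r) = 0 := by
        by_contra hne
        have hd := Nat.div_add_mod (L - r) r
        set q := (L - r) / r with hq
        have hcase : (L - r) % r = 0 ∨ (L - r) % r = 1 := by
          by_contra hc
          push_neg at hc
          simp [ClusterAux.tval, hc.1, hc.2] at hne
        have hmem : L ∈ (Finset.Icc 1 n).biUnion
            (fun m => ({m * r, m * r + 1} : Finset ℕ)) := by
          rcases hcase with h0 | h1
          · have e : (q + 1) * r = r * q + r := by ring
            have hLq : L = (q + 1) * r := by omega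
            have hqn : q + 1 ≤ n := by
              by_contra hgt
              push_neg at hgt
              have g2 : (n + 1) * r ≤ (q + 1) * r := Nat.mul_le_mul_right r (by omega)
              have g3 : (n + 1) * r = n * r + r := by ring
              omega
            exact Finset.mem_biUnion.mpr ⟨q + 1, Finset.mem_Icc.mpr ⟨Nat.succ_le_succ (Nat.zero_le _), hqn⟩,
              by simp [hLq]⟩
          · have e : (q + 1) * r = r * q + r := by ring
            have hLq : L = (q + 1) * r + 1 := by omega
            have hqn : q + 1 ≤ n := by
              by_contra hgt
              push_neg at hgt
              have g2 : (n + 1) * r ≤ (q + 1) * r := Nat.mul_le_mul_right r (by omega)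
              have g3 : (n + 1) * r = n * r + r := by ring
              omega
            exact Finset.mem_biUnion.mpr ⟨q + 1, Finset.mem_Icc.mpr ⟨Nat.succ_le_succ (Nat.zero_le _), hqn⟩,
              by simp [hLq]⟩
        exact hnot hmem
      rw [hf]
      simp only
      rw [hvan0]
      simp
  have h6 : ∀ m ∈ Finset.Icc 1 n, ∑ L ∈ ({m * r, m * r + 1} : Finset ℕ), f L
      = -(MvPolynomial.esymm (Fin n) ℤ (m * r)) + MvPolynomial.esymm (Fin n) ℤ (m * r + 1) := by
    intro m hm
    have hm1 := (Finset.mem_Icc.mp hm).1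
    have hmr : r ≤ m * r := Nat.le_mul_of_pos_left r (by omega)
    rw [Finset.sum_pair (by omega : m * r ≠ m * r + 1)]
    have hsub : m * r - r = (m - 1) * r := by
      have : (m - 1) * r = m * r - 1 * r := by rw [Nat.sub_mul]
      omega
    have e0 : (m * r - r) % r = 0 := by
      rw [hsub]; exact Nat.mul_mod_left _ _
    have e1 : (m * r + 1 - r) % r = 1 := by
      have h' : m * r + 1 - r = (m - 1) * r + 1 := by omega
      rw [h', show (m - 1) * r + 1 = 1 + (m - 1) * r by omega, Nat.add_mul_mod_self_right]
      exact Nat.mod_eq_of_lt (by omega)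
    have v0 : ClusterAux.tval r (m * r - r) = 1 := by
      rw [ClusterAux.tval, if_pos e0]
    have v1 : ClusterAux.tval r (m * r + 1 - r) = -1 := by
      rw [ClusterAux.tval, if_neg (by omega), if_pos e1]
    rw [hf]
    simp only
    rw [v0, v1]
    simp only [neg_neg, map_one, one_mul, map_neg, neg_mul]
  rw [h1, h2, h4, h5, Finset.sum_congr rfl h6]
end

section
/- The generating function for words over the alphabet {1,2,3} avoiding the consecutive pattern 123 is 1/(1 - x_1 - x_2 - x_3 + x_1x_2x_3); in particular the number of such words with m_1 ones, m_2 twos, m_3 threes is the coefficient of x_1^{m_1}x_2^{m_2}x_3^{m_3} in this rational power series. -/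
/-- The number of words over `{1,2,3}` (encoded as `Fin 3`) with `m j`
occurrences of each letter `j`, avoiding the consecutive pattern `123`. -/
noncomputable def wordAvoidCount3 (m : Fin 3 → ℕ) : ℕ :=
  Nat.card {w : List (Fin 3) // (∀ j, w.count j = m j) ∧ AvoidsInc 3 w}

noncomputable def wordAvoidGF3 : MvPowerSeries (Fin 3) ℤ :=
  fun d => (wordAvoidCount3 ⇑d : ℤ)

section Aux

lemma av_iff (w : List (Fin 3)) : AvoidsInc 3 w ↔ ¬ ([0,1,2] <:+: w) := by
  unfold AvoidsInc
  constructor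
  · intro h hin
    exact h ⟨[0,1,2], hin, rfl, by simp [List.Chain', List.isChain_cons_cons]⟩
  · rintro h ⟨l, hin, hlen, hch⟩
    rcases l with _|⟨a,_|⟨b,_|⟨c,_|⟨d,t⟩⟩⟩⟩ <;> simp_all [List.Chain', List.isChain_cons_cons]
    obtain ⟨ha, hb, hc⟩ : a = 0 ∧ b = 1 ∧ c = 2 := by
      clear hin h; revert hch; revert b c; revert a; decide
    subst ha hb hc; exact h hin

lemma av_cons1 (w : List (Fin 3)) : AvoidsInc 3 ((1:Fin 3) :: w) ↔ AvoidsInc 3 w := by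
  rw [av_iff, av_iff, List.infix_cons_iff]
  simp [List.cons_prefix_cons]

lemma av_cons2 (w : List (Fin 3)) : AvoidsInc 3 ((2:Fin 3) :: w) ↔ AvoidsInc 3 w := by
  rw [av_iff, av_iff, List.infix_cons_iff]
  simp [List.cons_prefix_cons]

lemma av_cons0 (w : List (Fin 3)) :
    AvoidsInc 3 ((0:Fin 3) :: w) ↔ AvoidsInc 3 w ∧ ¬ ([1,2] <+: w) := by
  rw [av_iff, av_iff, List.infix_cons_iff]
  simp only [List.cons_prefix_cons]
  tauto

lemma len3 (w : List (Fin 3)) : w.length = w.count 0 + w.count 1 + w.count 2 := by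
  induction w with
  | nil => simp
  | cons a t ih => fin_cases a <;> simp_all [List.count_cons] <;> omega

def Good (m : Fin 3 → ℕ) : Set (List (Fin 3)) :=
  {w | (∀ j, w.count j = m j) ∧ AvoidsInc 3 w}

def dec (m : Fin 3 → ℕ) (j : Fin 3) : Fin 3 → ℕ := Function.update m j (m j - 1)

lemma count_eq (m : Fin 3 → ℕ) : wordAvoidCount3 m = (Good m).ncard :=
  Nat.card_coe_set_eq (Good m)

lemma good_finite (m : Fin 3 → ℕ) : (Good m).Finite := by
  apply (List.finite_length_eq (Fin 3) (m 0 + m 1 + m 2)).subset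
  rintro w ⟨hc, -⟩
  simp only [Set.mem_setOf_eq, len3 w, hc]

lemma dec_apply (m : Fin 3 → ℕ) (j k : Fin 3) :
    dec m j k = if k = j then m j - 1 else m k := Function.update_apply ..

lemma good_partition (m : Fin 3 → ℕ) (hm : m ≠ 0) :
    Good m = (Good m ∩ {w | w.head? = some 0}) ∪ (Good m ∩ {w | w.head? = some 1})
      ∪ (Good m ∩ {w | w.head? = some 2}) := by
  ext w
  simp only [Set.mem_union, Set.mem_inter_iff, Set.mem_setOf_eq]
  constructor
  · intro hw
    match w, hw with
    | [], hw =>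
      exfalso; apply hm; funext j
      have := (hw.1 j).symm; simpa using this
    | a :: t, hw => fin_cases a <;> simp_all
  · tauto

lemma counts_cons (m : Fin 3 → ℕ) (i : Fin 3) (hi : 1 ≤ m i) (t : List (Fin 3)) :
    (∀ j, (i :: t).count j = m j) ↔ (∀ j, t.count j = dec m i j) := by
  constructor <;> intro h j <;> have hj := h j <;> rw [dec_apply] at * <;>
    by_cases hji : j = i <;> subst_eqs <;> simp_all [List.count_cons, eq_comm (a := i)] <;> omega

lemma inter_head1 (m : Fin 3 → ℕ) (hi : 1 ≤ m 1) :
    Good m ∩ {w | w.head? = some 1} = (List.cons 1) '' Good (dec m 1) := by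
  ext w
  constructor
  · rintro ⟨⟨hc, hav'⟩, hh⟩
    match w with
    | [] => simp at hh
    | a :: t =>
      obtain rfl : a = 1 := by simpa using hh
      exact ⟨t, ⟨(counts_cons m 1 hi t).mp hc, (av_cons1 t).mp hav'⟩, rfl⟩
  · rintro ⟨t, ⟨hc, ha⟩, rfl⟩
    exact ⟨⟨(counts_cons m 1 hi t).mpr hc, (av_cons1 t).mpr ha⟩, rfl⟩

lemma inter_head2 (m : Fin 3 → ℕ) (hi : 1 ≤ m 2) :
    Good m ∩ {w | w.head? = some 2} = (List.cons 2) '' Good (dec m 2) := by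
  ext w
  constructor
  · rintro ⟨⟨hc, hav'⟩, hh⟩
    match w with
    | [] => simp at hh
    | a :: t =>
      obtain rfl : a = 2 := by simpa using hh
      exact ⟨t, ⟨(counts_cons m 2 hi t).mp hc, (av_cons2 t).mp hav'⟩, rfl⟩
  · rintro ⟨t, ⟨hc, ha⟩, rfl⟩
    exact ⟨⟨(counts_cons m 2 hi t).mpr hc, (av_cons2 t).mpr ha⟩, rfl⟩

lemma inter_head0 (m : Fin 3 → ℕ) (hi : 1 ≤ m 0) :
    Good m ∩ {w | w.head? = some 0}
      = (List.cons 0) '' (Good (dec m 0) \ {w | [1,2] <+: w}) := by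
  ext w
  constructor
  · rintro ⟨⟨hc, hav'⟩, hh⟩
    match w with
    | [] => simp at hh
    | a :: t =>
      obtain rfl : a = 0 := by simpa using hh
      obtain ⟨h1, h2⟩ := (av_cons0 t).mp hav'
      exact ⟨t, ⟨⟨(counts_cons m 0 hi t).mp hc, h1⟩, h2⟩, rfl⟩
  · rintro ⟨t, ⟨⟨hc, ha⟩, hp⟩, rfl⟩
    exact ⟨⟨(counts_cons m 0 hi t).mpr hc, (av_cons0 t).mpr ⟨ha, hp⟩⟩, rfl⟩

lemma inter_head_empty (m : Fin 3 → ℕ) (i : Fin 3) (hi : m i = 0) :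
    Good m ∩ {w | w.head? = some i} = ∅ := by
  ext w
  simp only [Set.mem_inter_iff, Set.mem_setOf_eq, Set.mem_empty_iff_false, iff_false]
  rintro ⟨⟨hc, -⟩, hh⟩
  rcases w with _ | ⟨a, t⟩
  · simp at hh
  · obtain rfl : a = i := by simpa using hh
    have := hc a
    simp [List.count_cons] at this
    omega

lemma inter_pre12 (m : Fin 3 → ℕ) (h1 : 1 ≤ m 1) (h2 : 1 ≤ m 2) :
    Good m ∩ {w | [1,2] <+: w}
      = (fun t => (1:Fin 3) :: 2 :: t) '' Good (dec (dec m 1) 2) := by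
  have h2' : 1 ≤ dec m 1 2 := by rw [dec_apply]; simpa using h2
  ext w
  constructor
  · rintro ⟨⟨hc, hav'⟩, hp⟩
    obtain ⟨t, rfl⟩ := hp
    refine ⟨t, ⟨?_, ?_⟩, rfl⟩
    · exact (counts_cons _ 2 h2' t).mp ((counts_cons m 1 h1 _).mp hc)
    · exact (av_cons2 t).mp ((av_cons1 _).mp hav')
  · rintro ⟨t, ⟨hc, ha⟩, rfl⟩
    refine ⟨⟨?_, (av_cons1 _).mpr ((av_cons2 t).mpr ha)⟩, ⟨t, rfl⟩⟩
    exact (counts_cons m 1 h1 _).mpr ((counts_cons _ 2 h2' t).mpr hc)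

lemma inter_pre12_empty (m : Fin 3 → ℕ) (h : m 1 = 0 ∨ m 2 = 0) :
    Good m ∩ {w | [1,2] <+: w} = ∅ := by
  ext w
  simp only [Set.mem_inter_iff, Set.mem_setOf_eq, Set.mem_empty_iff_false, iff_false]
  rintro ⟨⟨hc, -⟩, hp⟩
  obtain ⟨t, rfl⟩ := hp
  have hc1 := hc 1
  have hc2 := hc 2
  simp [List.count_cons] at hc1 hc2
  omega

lemma ncard_head1 (m : Fin 3 → ℕ) :
    (Good m ∩ {w | w.head? = some 1}).ncard
      = if 1 ≤ m 1 then (Good (dec m 1)).ncard else 0 := by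
  by_cases h : 1 ≤ m 1
  · rw [if_pos h, inter_head1 m h, Set.ncard_image_of_injective _ List.cons_injective]
  · rw [if_neg h, inter_head_empty m 1 (by omega), Set.ncard_empty]

lemma ncard_head2 (m : Fin 3 → ℕ) :
    (Good m ∩ {w | w.head? = some 2}).ncard
      = if 1 ≤ m 2 then (Good (dec m 2)).ncard else 0 := by
  by_cases h : 1 ≤ m 2
  · rw [if_pos h, inter_head2 m h, Set.ncard_image_of_injective _ List.cons_injective]
  · rw [if_neg h, inter_head_empty m 2 (by omega), Set.ncard_empty]

lemma ncard_pre12 (m : Fin 3 → ℕ) :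
    (Good m ∩ {w | [1,2] <+: w}).ncard
      = if 1 ≤ m 1 ∧ 1 ≤ m 2 then (Good (dec (dec m 1) 2)).ncard else 0 := by
  by_cases h : 1 ≤ m 1 ∧ 1 ≤ m 2
  · rw [if_pos h, inter_pre12 m h.1 h.2]
    exact Set.ncard_image_of_injective _ (fun a b hab => by simpa using hab)
  · rw [if_neg h, inter_pre12_empty m (by omega), Set.ncard_empty]

lemma ncard_head0 (m : Fin 3 → ℕ) (h : 1 ≤ m 0) :
    (Good m ∩ {w | w.head? = some 0}).ncard
        + (Good (dec m 0) ∩ {w | [1,2] <+: w}).ncard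
      = (Good (dec m 0)).ncard := by
  have hdisj : Disjoint (Good (dec m 0) \ {w | [1,2] <+: w})
      (Good (dec m 0) ∩ {w | [1,2] <+: w}) :=
    Set.disjoint_left.mpr fun w hw h2 => hw.2 h2.2
  rw [inter_head0 m h, Set.ncard_image_of_injective _ List.cons_injective,
    ← Set.ncard_union_eq hdisj ((good_finite _).diff)
      ((good_finite _).inter_of_left _), Set.diff_union_inter]

lemma good_zero : Good (0 : Fin 3 → ℕ) = {([] : List (Fin 3))} := by
  ext w
  simp only [Good, Set.mem_setOf_eq, Set.mem_singleton_iff]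
  constructor
  · rintro ⟨hc, -⟩
    have := len3 w
    simp only [hc, Pi.zero_apply] at this
    exact List.length_eq_zero_iff.mp (by omega)
  · rintro rfl
    refine ⟨by simp, ?_⟩
    rintro ⟨l, hin, hlen, -⟩
    rw [List.infix_nil] at hin
    subst hin; simp at hlen

lemma key (m : Fin 3 → ℕ) :
    (wordAvoidCount3 m : ℤ)
        + (if 1 ≤ m 0 ∧ 1 ≤ m 1 ∧ 1 ≤ m 2 then
            (wordAvoidCount3 (fun j => m j - 1) : ℤ) else 0)
      = (if m = 0 then 1 else 0)
        + (if 1 ≤ m 0 then (wordAvoidCount3 (dec m 0) : ℤ) else 0)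
        + (if 1 ≤ m 1 then (wordAvoidCount3 (dec m 1) : ℤ) else 0)
        + (if 1 ≤ m 2 then (wordAvoidCount3 (dec m 2) : ℤ) else 0) := by
  by_cases hm : m = 0
  · subst hm
    simp [count_eq, good_zero, show ¬ (1:ℕ) ≤ 0 by omega]
  · rw [if_neg hm]
    have d01 : Disjoint (Good m ∩ {w | w.head? = some 0})
        (Good m ∩ {w | w.head? = some 1}) := by
      rw [Set.disjoint_left]; rintro w ⟨-, h0⟩ ⟨-, h1⟩; simp_all
    have d02 : Disjoint ((Good m ∩ {w | w.head? = some 0})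
        ∪ (Good m ∩ {w | w.head? = some 1})) (Good m ∩ {w | w.head? = some 2}) := by
      rw [Set.disjoint_left]
      rintro w (⟨-, h0⟩ | ⟨-, h1⟩) ⟨-, h2⟩ <;> simp_all
    have hpart : (Good m).ncard
        = (Good m ∩ {w | w.head? = some 0}).ncard
          + (Good m ∩ {w | w.head? = some 1}).ncard
          + (Good m ∩ {w | w.head? = some 2}).ncard := by
      conv_lhs => rw [good_partition m hm]
      rw [Set.ncard_union_eq d02 (((good_finite m).inter_of_left _).union
          ((good_finite m).inter_of_left _)) ((good_finite m).inter_of_left _),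
        Set.ncard_union_eq d01 ((good_finite m).inter_of_left _)
          ((good_finite m).inter_of_left _)]
    have h1 := ncard_head1 m
    have h2 := ncard_head2 m
    by_cases hm0 : 1 ≤ m 0
    · have h0 := ncard_head0 m hm0
      have h12 := ncard_pre12 (dec m 0)
      have e1 : dec m 0 1 = m 1 := by rw [dec_apply]; simp
      have e2 : dec m 0 2 = m 2 := by rw [dec_apply]; simp
      have e3 : dec (dec (dec m 0) 1) 2 = fun j => m j - 1 := by
        funext j; fin_cases j <;> simp [dec_apply] <;> rfl
      rw [e1, e2, e3] at h12
      rw [if_pos hm0]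
      by_cases hm1 : 1 ≤ m 1 <;> by_cases hm2 : 1 ≤ m 2 <;>
        simp only [hm1, hm2, and_true, true_and, and_self, and_false, false_and,
          if_true, if_false] at h1 h2 h12 ⊢ <;>
        push_cast [count_eq] <;> omega
    · rw [if_neg hm0, if_neg (by tauto)]
      have h0 : (Good m ∩ {w | w.head? = some 0}).ncard = 0 := by
        rw [inter_head_empty m 0 (by omega), Set.ncard_empty]
      by_cases hm1 : 1 ≤ m 1 <;> by_cases hm2 : 1 ≤ m 2 <;>
        simp only [hm1, hm2, if_true, if_false] at h1 h2 ⊢ <;>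
        push_cast [count_eq] <;> omega

end Aux

open MvPowerSeries in
/-- The generating function for words over `{1,2,3}` avoiding the consecutive
pattern `123` is `1/(1 - x₁ - x₂ - x₃ + x₁x₂x₃)`. -/
theorem words_avoiding_123_alphabet_three :
    wordAvoidGF3 *
      (1 - X 0 - X 1 - X 2 + X 0 * X 1 * X 2 : MvPowerSeries (Fin 3) ℤ) = 1 := by
  apply MvPowerSeries.ext
  intro d
  have coeffGF : ∀ e : Fin 3 →₀ ℕ, coeff e wordAvoidGF3 = (wordAvoidCount3 ⇑e : ℤ) :=
    fun e => rfl
  have expand : wordAvoidGF3 *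
      (1 - X 0 - X 1 - X 2 + X 0 * X 1 * X 2 : MvPowerSeries (Fin 3) ℤ)
    = wordAvoidGF3 - wordAvoidGF3 * X 0 - wordAvoidGF3 * X 1 - wordAvoidGF3 * X 2
      + wordAvoidGF3 * (X 0 * X 1 * X 2) := by ring
  rw [expand, map_add, map_sub, map_sub, map_sub]
  have hX : ∀ s : Fin 3, coeff d (wordAvoidGF3 * X s)
      = if 1 ≤ d s then (wordAvoidCount3 (dec ⇑d s) : ℤ) else 0 := by
    intro s
    rw [X_def, coeff_mul_monomial]
    simp only [Finsupp.single_le_iff]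
    split_ifs with h
    · rw [mul_one, coeffGF]
      refine congrArg _ (congrArg _ ?_)
      funext j
      rw [Finsupp.tsub_apply, dec_apply, Finsupp.single_apply]
      by_cases hj : j = s
      · subst hj; simp
      · rw [if_neg hj, if_neg (fun h' => hj h'.symm)]; simp
    · rfl
  have h012 : (X 0 * X 1 * X 2 : MvPowerSeries (Fin 3) ℤ)
      = monomial (Finsupp.single 0 1 + Finsupp.single 1 1 + Finsupp.single 2 1) 1 := by
    rw [X_def, X_def, X_def, monomial_mul_monomial, monomial_mul_monomial]
    norm_num
  have hcond : (Finsupp.single (0:Fin 3) 1 + Finsupp.single 1 1 + Finsupp.single 2 1 ≤ d)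
      ↔ (1 ≤ d 0 ∧ 1 ≤ d 1 ∧ 1 ≤ d 2) := by
    rw [Finsupp.le_def]
    constructor
    · intro h
      refine ⟨?_, ?_, ?_⟩ <;>
        [have := h 0; have := h 1; have := h 2] <;>
        simpa [Finsupp.single_apply] using this
    · intro h s
      fin_cases s <;> simp [Finsupp.single_apply] <;> omega
  have hT : coeff d (wordAvoidGF3 * (X 0 * X 1 * X 2))
      = if 1 ≤ d 0 ∧ 1 ≤ d 1 ∧ 1 ≤ d 2 then
          (wordAvoidCount3 (fun j => d j - 1) : ℤ) else 0 := by
    rw [h012, coeff_mul_monomial]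
    simp only [hcond]
    split_ifs with h
    · rw [mul_one, coeffGF]
      refine congrArg _ (congrArg _ ?_)
      funext j
      rw [Finsupp.tsub_apply]
      fin_cases j <;> simp [Finsupp.single_apply]
    · rfl
  rw [hX 0, hX 1, hX 2, hT, coeff_one, coeffGF]
  have hk := key ⇑d
  simp only [Finsupp.coe_eq_zero] at hk
  linarith [hk]
end
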